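/- arXiv:1204.5043 — 3 statements merged into one kernel-verified Lean document; each statement's English description precedes it below -/
import Mathlib

section
/- Let 1 ≤ k ≤ d be integers, L > 0, and let v ∈ ℝ^d satisfy v_1 ≥ v_2 ≥ … ≥ v_d ≥ 0. Suppose r ∈ {0, …, k−1} and ℓ ∈ {k, …, d} satisfy, with T := ∑_{i=k−r}^ℓ v_i, D := ℓ − k + (L+1)r + L + 1, and conventions v_0 = +∞, v_{d+1} = −∞: (1/(L+1))·v_{k−r−1} > T/D ≥ (1/(L+1))·v_{k−r} and v_ℓ > T/D ≥ v_{ℓ+1}. Then the vector q ∈ ℝ^d defined by q_i = (L/(L+1))·v_i for i = 1, …, k−r−1, q_i = v_i − T/D for i = k−r, …, ℓ, and q_i = 0 for i = ℓ+1, …, d, is the unique minimizer over u ∈ ℝ^d of (1/2)‖u − v‖₂² + (1/(2L))(‖u‖_k^sp)²; that is, q is the proximity operator of (1/(2L))(‖·‖_k^sp)² evaluated at v. -/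
/-- The nonincreasing rearrangement of the absolute values of `u`,
0-indexed: `absDown u i` is the `(i+1)`-th largest of `|u 0|, …, |u (d-1)|`. -/
noncomputable def absDown {d : ℕ} (u : Fin d → ℝ) (i : Fin d) : ℝ :=
  |u (Tuple.sort (fun j => |u j|) i.rev)|

/-- 1-indexed access to the nonincreasing rearrangement: `zD u i = |u|↓_i` for `1 ≤ i ≤ d`. -/
noncomputable def zD {d : ℕ} (u : Fin d → ℝ) (i : ℕ) : ℝ :=
  if h : 1 ≤ i ∧ i ≤ d then absDown u ⟨i - 1, by omega⟩ else 0

/-- The unit ball of the k-support norm: the convex hull of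
`S_k = {w : ‖w‖₀ ≤ k, ‖w‖₂ ≤ 1}`. -/
noncomputable def kSupBall (d k : ℕ) : Set (EuclideanSpace ℝ (Fin d)) :=
  convexHull ℝ {w | (Finset.univ.filter fun i => w i ≠ 0).card ≤ k ∧ ‖w‖ ≤ 1}

/-- The k-support norm, defined as the gauge of `kSupBall d k`. -/
noncomputable def kSupNorm (d k : ℕ) (w : EuclideanSpace ℝ (Fin d)) : ℝ :=
  gauge (kSupBall d k) w

/-- The elastic-net norm `max{‖w‖₂, ‖w‖₁ / √k}`. -/
noncomputable def elNet (d k : ℕ) (w : EuclideanSpace ℝ (Fin d)) : ℝ :=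
  max ‖w‖ ((∑ i, |w i|) / Real.sqrt k)

/-- 1-indexed access to the entries of a vector: `ent v i = v_i` for `1 ≤ i ≤ d`. -/
noncomputable def ent {d : ℕ} (v : EuclideanSpace ℝ (Fin d)) (i : ℕ) : ℝ :=
  if h : 1 ≤ i ∧ i ≤ d then v ⟨i - 1, by omega⟩ else 0

section St12Aux
open Finset Pointwise

open Finset

lemma st12_card {d : ℕ} (p : ℕ → Prop) [DecidablePred p] :
    (Finset.univ.filter fun i : Fin d => p i.val).card = ((Finset.range d).filter p).card := by
  refine Finset.card_bij (fun i _ => i.val) ?_ ?_ ?_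
  · intro a ha
    simp only [mem_filter, mem_univ, true_and] at ha
    simp [a.isLt, ha]
  · intro a ha b hb h
    exact Fin.ext h
  · intro b hb
    simp only [mem_filter, mem_range] at hb
    exact ⟨⟨b, hb.1⟩, by simp [hb.2], rfl⟩

lemma st12_topk {d k : ℕ} (hk1 : 1 ≤ k) (hkd : k ≤ d) (z : Fin d → ℝ)
    (hmono : ∀ i j : Fin d, i ≤ j → z j ≤ z i) (hnn : ∀ i, 0 ≤ z i)
    (A : Finset (Fin d)) (hA : A.card ≤ k) :
    ∑ i ∈ A, (z i)^2 ≤ ∑ i ∈ Finset.univ.filter (fun i : Fin d => (i : ℕ) < k), (z i)^2 := by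
  set K := Finset.univ.filter (fun i : Fin d => (i : ℕ) < k) with hK
  have hKcard : K.card = k := by
    have h := st12_card (d := d) (fun m => m < k)
    have h2 : (Finset.range d).filter (fun m => m < k) = Finset.range k := by
      ext m; simp only [mem_filter, mem_range]; omega
    rw [hK, h, h2, Finset.card_range]
  have hkd' : k - 1 < d := by omega
  set m : Fin d := ⟨k - 1, hkd'⟩ with hm
  have h1 : ∀ i ∈ A \ K, z i ^ 2 ≤ z m ^ 2 := by
    intro i hi
    simp only [Finset.mem_sdiff, hK, mem_filter, mem_univ, true_and, not_lt] at hi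
    have : m ≤ i := by simp [hm, Fin.le_def]; omega
    exact pow_le_pow_left₀ (hnn i) (hmono m i this) 2
  have h2 : ∀ i ∈ K \ A, z m ^ 2 ≤ z i ^ 2 := by
    intro i hi
    simp only [Finset.mem_sdiff, hK, mem_filter, mem_univ, true_and] at hi
    have : i ≤ m := by simp [hm, Fin.le_def]; omega
    exact pow_le_pow_left₀ (hnn m) (hmono i m this) 2
  have hcard : (A \ K).card ≤ (K \ A).card := by
    have e1 := Finset.card_sdiff_add_card_inter A K
    have e2 := Finset.card_sdiff_add_card_inter K A
    rw [Finset.inter_comm K A] at e2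
    omega
  have hsum : ∑ i ∈ A \ K, z i ^ 2 ≤ ∑ i ∈ K \ A, z i ^ 2 := by
    calc ∑ i ∈ A \ K, z i ^ 2 ≤ (A \ K).card • (z m ^ 2) := Finset.sum_le_card_nsmul _ _ _ h1
    _ ≤ (K \ A).card • (z m ^ 2) := by
        apply nsmul_le_nsmul_left (by positivity) hcard
    _ ≤ ∑ i ∈ K \ A, z i ^ 2 := Finset.card_nsmul_le_sum _ _ _ h2
  have eA := Finset.sum_inter_add_sum_sdiff A K (fun i => z i ^ 2)
  have eK := Finset.sum_inter_add_sum_sdiff K A (fun i => z i ^ 2)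
  rw [Finset.inter_comm K A] at eK
  linarith

lemma st12_absorb {d k : ℕ} (hk1 : 1 ≤ k) (u : EuclideanSpace ℝ (Fin d)) :
    ∃ R : ℝ, 0 < R ∧ u ∈ R • kSupBall d k := by
  set R : ℝ := (∑ i, |u i|) + 1 with hR
  have hRpos : 0 < R := by positivity
  refine ⟨R, hRpos, ?_⟩
  rw [Set.mem_smul_set_iff_inv_smul_mem₀ (ne_of_gt hRpos)]
  set σ : Fin d → ℝ := fun i => if 0 ≤ u i then 1 else -1 with hσ
  set p : Option (Fin d) → EuclideanSpace ℝ (Fin d) := fun o =>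
    match o with
    | none => 0
    | some i => σ i • EuclideanSpace.single i 1 with hp
  set w : Option (Fin d) → ℝ := fun o =>
    match o with
    | none => 1
    | some i => |u i| with hw
  have hw0 : ∀ o ∈ (Finset.univ : Finset (Option (Fin d))), 0 ≤ w o := by
    intro o _; cases o <;> simp [hw] <;> positivity
  have hwsum : ∑ o : Option (Fin d), w o = R := by
    rw [Fintype.sum_option]; simp [hw, hR, add_comm]
  have hmem : ∀ o ∈ (Finset.univ : Finset (Option (Fin d))), p o ∈
      {w : EuclideanSpace ℝ (Fin d) | (Finset.univ.filter fun i => w i ≠ 0).card ≤ k ∧ ‖w‖ ≤ 1} := by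
    intro o _
    cases o with
    | none =>
      constructor
      · simp [hp]
      · simp [hp]
    | some i =>
      have hσi : σ i = 1 ∨ σ i = -1 := by by_cases h : 0 ≤ u i <;> simp [hσ, h]
      have hσne : σ i ≠ 0 := by rcases hσi with h | h <;> rw [h] <;> norm_num
      constructor
      · have : (Finset.univ.filter fun j => (p (some i)) j ≠ 0) ⊆ {i} := by
          intro j hj
          simp only [mem_filter, mem_univ, true_and] at hj
          simp only [Finset.mem_singleton]
          by_contra hne
          apply hj
          simp [hp, EuclideanSpace.single_apply, hne]
        calc _ ≤ ({i} : Finset (Fin d)).card := Finset.card_le_card this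
        _ = 1 := rfl
        _ ≤ k := hk1
      · simp only [hp]
        rw [norm_smul, EuclideanSpace.norm_single]
        rcases hσi with h | h <;> rw [h] <;> norm_num
  have hcm := Finset.centerMass_mem_convexHull (Finset.univ : Finset (Option (Fin d)))
    hw0 (by rw [hwsum]; exact hRpos) hmem
  have : Finset.univ.centerMass w p = R⁻¹ • u := by
    rw [Finset.centerMass, hwsum]
    congr 1
    rw [Fintype.sum_option]
    have : (∑ i : Fin d, w (some i) • p (some i)) = u := by
      ext j
      have happ : (∑ i : Fin d, w (some i) • p (some i)) j
          = ∑ i : Fin d, (w (some i) • p (some i)) j := by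
        rw [WithLp.ofLp_sum]; exact Finset.sum_apply j Finset.univ _
      rw [happ]
      simp only [hw, hp, PiLp.smul_apply, smul_eq_mul, EuclideanSpace.single_apply]
      rw [Finset.sum_eq_single j]
      · simp only [if_pos rfl]
        by_cases h : 0 ≤ u j
        · simp [hσ, h, abs_of_nonneg h]
        · simp only [hσ, if_neg h]
          rw [abs_of_neg (lt_of_not_ge h)]
          simp
      · intro b _ hbj
        simp [if_neg (Ne.symm hbj)]
      · intro h
        exact absurd (Finset.mem_univ j) h
    rw [this]
    simp [hp]
  rw [this] at hcm
  exact hcm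

lemma st12_gauge {d k : ℕ} (hk1 : 1 ≤ k) (z : Fin d → ℝ) (N : ℝ) (hN : 0 < N)
    (hball : ∀ w ∈ kSupBall d k, (∑ i, z i * w i) ≤ N) (u : EuclideanSpace ℝ (Fin d)) :
    ∑ i, z i * u i ≤ gauge (kSupBall d k) u * N := by
  have hne : { r : ℝ | 0 < r ∧ u ∈ r • kSupBall d k }.Nonempty := by
    obtain ⟨R, hR, hmem⟩ := st12_absorb (k := k) hk1 u
    exact ⟨R, hR, hmem⟩
  have hle : (∑ i, z i * u i) / N ≤ gauge (kSupBall d k) u := by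
    rw [gauge]
    apply le_csInf hne
    intro r hr
    obtain ⟨hrpos, hmem⟩ := hr
    obtain ⟨w, hw, hwu⟩ := hmem
    have : ∑ i, z i * u i = r * ∑ i, z i * w i := by
      rw [Finset.mul_sum]
      apply Finset.sum_congr rfl
      intro i _
      rw [← hwu]
      simp only [PiLp.smul_apply, smul_eq_mul]
      ring
    rw [div_le_iff₀ hN, this]
    have := hball w hw
    nlinarith
  rw [div_le_iff₀ hN] at hle
  linarith

lemma st12_poly {d : ℕ} (s : ℕ) :
    ∀ (n : ℕ) (x : EuclideanSpace ℝ (Fin d)) (A : Finset (Fin d)),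
    (A.filter (fun i => x i ≠ 0 ∧ x i ≠ 1)).card ≤ n →
    (∀ i ∈ A, 0 ≤ x i ∧ x i ≤ 1) → (∀ i ∉ A, x i = 0) →
    (∑ i ∈ A, x i) = (s : ℝ) →
    x ∈ convexHull ℝ {y : EuclideanSpace ℝ (Fin d) |
      (∀ i, y i = 0 ∨ y i = 1) ∧ (Finset.univ.filter (fun i => y i ≠ 0)).card = s ∧
      ∀ i, y i ≠ 0 → i ∈ A} := by
  intro n
  induction n with
  | zero =>
    intro x A hF hbd hout hsum
    apply subset_convexHull
    have h01 : ∀ i, x i = 0 ∨ x i = 1 := by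
      intro i
      by_cases hi : i ∈ A
      · by_contra h
        push_neg at h
        have hmem : i ∈ A.filter (fun i => x i ≠ 0 ∧ x i ≠ 1) := by
          simp [mem_filter, hi, h.1, h.2]
        have := Finset.card_pos.2 ⟨i, hmem⟩
        omega
      · exact Or.inl (hout i hi)
    have hsub : Finset.univ.filter (fun i => x i ≠ 0) ⊆ A := by
      intro i hi
      simp only [mem_filter, mem_univ, true_and] at hi
      by_contra h
      exact hi (hout i h)
    have hsum2 : ∑ i ∈ A, x i = ((Finset.univ.filter (fun i => x i ≠ 0)).card : ℝ) := by
      rw [← Finset.sum_subset hsub (fun i _ hi => by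
        simp only [mem_filter, mem_univ, true_and, not_not] at hi; exact hi)]
      rw [Finset.card_eq_sum_ones, Nat.cast_sum]
      apply Finset.sum_congr rfl
      intro i hi
      simp only [mem_filter, mem_univ, true_and] at hi
      rcases h01 i with h | h
      · exact absurd h hi
      · simp [h]
    refine ⟨h01, ?_, fun i hi => hsub (by simp [hi])⟩
    have hcast : ((Finset.univ.filter (fun i => x i ≠ 0)).card : ℝ) = (s : ℝ) := by
      rw [← hsum2, hsum]
    exact_mod_cast hcast
  | succ n ih =>
    intro x A hF hbd hout hsum
    by_cases hFn : (A.filter (fun i => x i ≠ 0 ∧ x i ≠ 1)).card ≤ n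
    · exact ih x A hFn hbd hout hsum
    set F := A.filter (fun i => x i ≠ 0 ∧ x i ≠ 1) with hFdef
    have hFcard : F.card = n + 1 := by omega
    obtain ⟨i, hiF⟩ := Finset.card_pos.1 (by omega : 0 < F.card)
    have hiA : i ∈ A := (Finset.mem_filter.1 hiF).1
    have hxi : x i ≠ 0 ∧ x i ≠ 1 := (Finset.mem_filter.1 hiF).2
    have hxi0 : 0 < x i := lt_of_le_of_ne (hbd i hiA).1 (Ne.symm hxi.1)
    have hxi1 : x i < 1 := lt_of_le_of_ne (hbd i hiA).2 hxi.2
    have hex : ∃ j ∈ F, j ≠ i := by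
      by_contra h
      push_neg at h
      have hFi : F = {i} := Finset.eq_singleton_iff_unique_mem.2 ⟨hiF, fun j hj => h j hj⟩
      have h01 : ∀ j ∈ A.erase i, x j = 0 ∨ x j = 1 := by
        intro j hj
        obtain ⟨hji, hjA⟩ := Finset.mem_erase.1 hj
        by_contra hc
        push_neg at hc
        have hjF : j ∈ F := by simp [hFdef, mem_filter, hjA, hc.1, hc.2]
        rw [hFi] at hjF
        exact hji (Finset.mem_singleton.1 hjF)
      have hsplit : ∑ j ∈ A, x j = x i + ∑ j ∈ A.erase i, x j :=
        (Finset.add_sum_erase A x hiA).symm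
      have hsum3 : ∑ j ∈ A.erase i, x j = (((A.erase i).filter (fun j => x j ≠ 0)).card : ℝ) := by
        rw [← Finset.sum_subset (Finset.filter_subset (fun j => x j ≠ 0) (A.erase i))
          (fun j hj hj2 => by
            simp only [mem_filter, not_and, not_not] at hj2
            exact hj2 hj)]
        rw [Finset.card_eq_sum_ones, Nat.cast_sum]
        apply Finset.sum_congr rfl
        intro j hj
        simp only [mem_filter] at hj
        rcases h01 j hj.1 with h | h
        · exact absurd h hj.2
        · simp [h]
      rw [hsplit, hsum3] at hsum
      set t := ((A.erase i).filter (fun j => x j ≠ 0)).card with ht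
      rcases le_or_gt s t with hst | hst
      · have : (s:ℝ) ≤ (t:ℝ) := by exact_mod_cast hst
        linarith
      · have : (t:ℝ) + 1 ≤ (s:ℝ) := by exact_mod_cast hst
        linarith
    obtain ⟨j, hjF, hji⟩ := hex
    have hij : i ≠ j := Ne.symm hji
    have hjA : j ∈ A := (Finset.mem_filter.1 hjF).1
    have hxj : x j ≠ 0 ∧ x j ≠ 1 := (Finset.mem_filter.1 hjF).2
    have hxj0 : 0 < x j := lt_of_le_of_ne (hbd j hjA).1 (Ne.symm hxj.1)
    have hxj1 : x j < 1 := lt_of_le_of_ne (hbd j hjA).2 hxj.2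
    set e : EuclideanSpace ℝ (Fin d) :=
      EuclideanSpace.single i (1:ℝ) - EuclideanSpace.single j 1 with he
    have heval : ∀ t : Fin d, e t = (if t = i then 1 else 0) - (if t = j then 1 else 0) := by
      intro t
      simp [he, PiLp.sub_apply, EuclideanSpace.single_apply]
    set a : ℝ := min (1 - x i) (x j) with ha
    set b : ℝ := min (x i) (1 - x j) with hb
    have ha0 : 0 < a := lt_min (by linarith) hxj0
    have hb0 : 0 < b := lt_min hxi0 (by linarith)
    have hab : 0 < a + b := by linarith
    set x1 : EuclideanSpace ℝ (Fin d) := x + a • e with hx1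
    set x2 : EuclideanSpace ℝ (Fin d) := x - b • e with hx2
    have hx1eval : ∀ t, x1 t = x t + a * ((if t = i then 1 else 0) - (if t = j then 1 else 0)) := by
      intro t
      simp only [hx1, PiLp.add_apply, PiLp.smul_apply, smul_eq_mul, heval]
    have hx2eval : ∀ t, x2 t = x t - b * ((if t = i then 1 else 0) - (if t = j then 1 else 0)) := by
      intro t
      simp only [hx2, PiLp.sub_apply, PiLp.smul_apply, smul_eq_mul, heval]
    have hx1i : x1 i = x i + a := by rw [hx1eval, if_pos rfl, if_neg hij]; ring
    have hx1j : x1 j = x j - a := by rw [hx1eval, if_neg hji, if_pos rfl]; ring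
    have hx1t : ∀ t, t ≠ i → t ≠ j → x1 t = x t := by
      intro t h1 h2; rw [hx1eval, if_neg h1, if_neg h2]; ring
    have hx2i : x2 i = x i - b := by rw [hx2eval, if_pos rfl, if_neg hij]; ring
    have hx2j : x2 j = x j + b := by rw [hx2eval, if_neg hji, if_pos rfl]; ring
    have hx2t : ∀ t, t ≠ i → t ≠ j → x2 t = x t := by
      intro t h1 h2; rw [hx2eval, if_neg h1, if_neg h2]; ring
    have hesum : ∑ t ∈ A, e t = 0 := by
      rw [Finset.sum_congr rfl (fun t _ => heval t), Finset.sum_sub_distrib]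
      rw [Finset.sum_ite_eq' A i (fun _ => (1:ℝ)), Finset.sum_ite_eq' A j (fun _ => (1:ℝ))]
      simp [hiA, hjA]
    have hx1sum : ∑ t ∈ A, x1 t = (s : ℝ) := by
      have h : ∀ t ∈ A, x1 t = x t + a * e t := by
        intro t _; rw [hx1eval, heval]
      rw [Finset.sum_congr rfl h, Finset.sum_add_distrib, ← Finset.mul_sum, hesum, hsum]
      ring
    have hx2sum : ∑ t ∈ A, x2 t = (s : ℝ) := by
      have h : ∀ t ∈ A, x2 t = x t - b * e t := by
        intro t _; rw [hx2eval, heval]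
      rw [Finset.sum_congr rfl h, Finset.sum_sub_distrib, ← Finset.mul_sum, hesum, hsum]
      ring
    have hale1 : a ≤ 1 - x i := min_le_left _ _
    have hale2 : a ≤ x j := min_le_right _ _
    have hble1 : b ≤ x i := min_le_left _ _
    have hble2 : b ≤ 1 - x j := min_le_right _ _
    have hbd1 : ∀ t ∈ A, 0 ≤ x1 t ∧ x1 t ≤ 1 := by
      intro t htA
      by_cases h1 : t = i
      · subst h1; rw [hx1i]; constructor <;> linarith
      · by_cases h2 : t = j
        · subst h2; rw [hx1j]; constructor <;> linarith
        · rw [hx1t t h1 h2]; exact hbd t htA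
    have hbd2 : ∀ t ∈ A, 0 ≤ x2 t ∧ x2 t ≤ 1 := by
      intro t htA
      by_cases h1 : t = i
      · subst h1; rw [hx2i]; constructor <;> linarith
      · by_cases h2 : t = j
        · subst h2; rw [hx2j]; constructor <;> linarith
        · rw [hx2t t h1 h2]; exact hbd t htA
    have hout1 : ∀ t, t ∉ A → x1 t = 0 := by
      intro t htA
      have h1 : t ≠ i := fun h => htA (h ▸ hiA)
      have h2 : t ≠ j := fun h => htA (h ▸ hjA)
      rw [hx1t t h1 h2]; exact hout t htA
    have hout2 : ∀ t, t ∉ A → x2 t = 0 := by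
      intro t htA
      have h1 : t ≠ i := fun h => htA (h ▸ hiA)
      have h2 : t ≠ j := fun h => htA (h ▸ hjA)
      rw [hx2t t h1 h2]; exact hout t htA
    have hF1 : (A.filter (fun t => x1 t ≠ 0 ∧ x1 t ≠ 1)).card ≤ n := by
      have hw : ∃ w ∈ F, (A.filter (fun t => x1 t ≠ 0 ∧ x1 t ≠ 1)) ⊆ F.erase w := by
        rcases min_cases (1 - x i) (x j) with ⟨haeq, _⟩ | ⟨haeq, _⟩
        · have haeq' : a = 1 - x i := ha.trans haeq
          refine ⟨i, hiF, ?_⟩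
          intro t htm
          obtain ⟨htA, ht01⟩ := Finset.mem_filter.1 htm
          have hti : t ≠ i := by
            intro h; subst h
            exact ht01.2 (by rw [hx1i, haeq']; ring)
          refine Finset.mem_erase.2 ⟨hti, ?_⟩
          by_cases h2 : t = j
          · subst h2; exact hjF
          · rw [hx1t t hti h2] at ht01
            exact Finset.mem_filter.2 ⟨htA, ht01⟩
        · have haeq' : a = x j := ha.trans haeq
          refine ⟨j, hjF, ?_⟩
          intro t htm
          obtain ⟨htA, ht01⟩ := Finset.mem_filter.1 htm
          have htj : t ≠ j := by
            intro h; subst h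
            exact ht01.1 (by rw [hx1j, haeq']; ring)
          refine Finset.mem_erase.2 ⟨htj, ?_⟩
          by_cases h1 : t = i
          · subst h1; exact hiF
          · rw [hx1t t h1 htj] at ht01
            exact Finset.mem_filter.2 ⟨htA, ht01⟩
      obtain ⟨w, hwF, hsub⟩ := hw
      calc (A.filter (fun t => x1 t ≠ 0 ∧ x1 t ≠ 1)).card ≤ (F.erase w).card :=
            Finset.card_le_card hsub
      _ = F.card - 1 := Finset.card_erase_of_mem hwF
      _ ≤ n := by omega
    have hF2 : (A.filter (fun t => x2 t ≠ 0 ∧ x2 t ≠ 1)).card ≤ n := by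
      have hw : ∃ w ∈ F, (A.filter (fun t => x2 t ≠ 0 ∧ x2 t ≠ 1)) ⊆ F.erase w := by
        rcases min_cases (x i) (1 - x j) with ⟨hbeq, _⟩ | ⟨hbeq, _⟩
        · have hbeq' : b = x i := hb.trans hbeq
          refine ⟨i, hiF, ?_⟩
          intro t htm
          obtain ⟨htA, ht01⟩ := Finset.mem_filter.1 htm
          have hti : t ≠ i := by
            intro h; subst h
            exact ht01.1 (by rw [hx2i, hbeq']; ring)
          refine Finset.mem_erase.2 ⟨hti, ?_⟩
          by_cases h2 : t = j
          · subst h2; exact hjF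
          · rw [hx2t t hti h2] at ht01
            exact Finset.mem_filter.2 ⟨htA, ht01⟩
        · have hbeq' : b = 1 - x j := hb.trans hbeq
          refine ⟨j, hjF, ?_⟩
          intro t htm
          obtain ⟨htA, ht01⟩ := Finset.mem_filter.1 htm
          have htj : t ≠ j := by
            intro h; subst h
            exact ht01.2 (by rw [hx2j, hbeq']; ring)
          refine Finset.mem_erase.2 ⟨htj, ?_⟩
          by_cases h1 : t = i
          · subst h1; exact hiF
          · rw [hx2t t h1 htj] at ht01
            exact Finset.mem_filter.2 ⟨htA, ht01⟩
      obtain ⟨w, hwF, hsub⟩ := hw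
      calc (A.filter (fun t => x2 t ≠ 0 ∧ x2 t ≠ 1)).card ≤ (F.erase w).card :=
            Finset.card_le_card hsub
      _ = F.card - 1 := Finset.card_erase_of_mem hwF
      _ ≤ n := by omega
    have h1 := ih x1 A hF1 hbd1 hout1 hx1sum
    have h2 := ih x2 A hF2 hbd2 hout2 hx2sum
    have hc1 : (0:ℝ) ≤ b / (a + b) := by positivity
    have hc2 : (0:ℝ) ≤ a / (a + b) := by positivity
    have hc12 : b / (a + b) + a / (a + b) = 1 := by
      rw [← add_div, add_comm b a]
      exact div_self (ne_of_gt hab)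
    have hcomb := (convex_convexHull ℝ _) h1 h2 hc1 hc2 hc12
    have hxeq : (b / (a + b)) • x1 + (a / (a + b)) • x2 = x := by
      rw [hx1, hx2]
      match_scalars <;> field_simp <;> ring
    rw [hxeq] at hcomb
    exact hcomb

lemma st12_mem {d k : ℕ} (hk1 : 1 ≤ k) (hkd : k ≤ d) (a r ℓ : ℕ) (hak : a + r + 1 = k)
    (hkl : k ≤ ℓ) (hld : ℓ ≤ d)
    (w : EuclideanSpace ℝ (Fin d)) (β : ℝ) (hβ : 0 < β)
    (htail : ∀ i : Fin d, ℓ ≤ (i : ℕ) → w i = 0)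
    (hmid : ∀ i : Fin d, a ≤ (i : ℕ) → (i : ℕ) < ℓ → 0 ≤ w i ∧ w i ≤ β)
    (hsum : ∑ i ∈ Finset.univ.filter (fun i : Fin d => a ≤ (i : ℕ) ∧ (i : ℕ) < ℓ), w i
      = ((r : ℝ) + 1) * β)
    (μ : ℝ) (hμ : 0 < μ)
    (hnormb : (∑ i ∈ Finset.univ.filter (fun i : Fin d => (i : ℕ) < a), (w i)^2)
      + ((r : ℝ) + 1) * β ^ 2 ≤ μ ^ 2) :
    w ∈ μ • kSupBall d k := by
  classical
  set A : Finset (Fin d) := Finset.univ.filter (fun i : Fin d => a ≤ (i : ℕ) ∧ (i : ℕ) < ℓ)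
    with hA
  set x : EuclideanSpace ℝ (Fin d) :=
    WithLp.toLp 2 (fun i => if a ≤ (i : ℕ) ∧ (i : ℕ) < ℓ then w i / β else 0) with hx
  have hxval : ∀ i : Fin d, x i = if a ≤ (i : ℕ) ∧ (i : ℕ) < ℓ then w i / β else 0 :=
    fun i => rfl
  have hmemA : ∀ i : Fin d, i ∈ A ↔ (a ≤ (i : ℕ) ∧ (i : ℕ) < ℓ) := by
    intro i; simp [hA]
  have hbd : ∀ i ∈ A, 0 ≤ x i ∧ x i ≤ 1 := by
    intro i hi
    rw [hmemA] at hi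
    rw [hxval, if_pos hi]
    obtain ⟨h1, h2⟩ := hmid i hi.1 hi.2
    constructor
    · positivity
    · rw [div_le_one hβ]; exact h2
  have hout : ∀ i ∉ A, x i = 0 := by
    intro i hi
    rw [hmemA] at hi
    rw [hxval, if_neg hi]
  have hsumx : ∑ i ∈ A, x i = ((r + 1 : ℕ) : ℝ) := by
    have h : ∀ i ∈ A, x i = w i / β := by
      intro i hi
      rw [hmemA] at hi
      rw [hxval, if_pos hi]
    rw [Finset.sum_congr rfl h, ← Finset.sum_div, hsum]
    push_cast
    field_simp
  have hpoly := st12_poly (r + 1) ((A.filter (fun i => x i ≠ 0 ∧ x i ≠ 1)).card) x A le_rfl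
    hbd hout hsumx
  -- the big part
  set bigw : EuclideanSpace ℝ (Fin d) := WithLp.toLp 2 (fun i => if (i : ℕ) < a then w i else 0) with hbigw
  have hbigval : ∀ i : Fin d, bigw i = if (i : ℕ) < a then w i else 0 := fun i => rfl
  set V : Set (EuclideanSpace ℝ (Fin d)) := {y : EuclideanSpace ℝ (Fin d) |
      (∀ i, y i = 0 ∨ y i = 1) ∧ (Finset.univ.filter (fun i => y i ≠ 0)).card = r + 1 ∧
      ∀ i, y i ≠ 0 → i ∈ A} with hV
  set C' : Set (EuclideanSpace ℝ (Fin d)) :=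
    {y : EuclideanSpace ℝ (Fin d) | bigw + β • y ∈ μ • kSupBall d k} with hC'
  have hballconv : Convex ℝ (μ • kSupBall d k) := by
    apply Convex.smul
    exact convex_convexHull ℝ _
  have hVC : V ⊆ C' := by
    rintro y ⟨hy01, hycard, hysupp⟩
    set u : EuclideanSpace ℝ (Fin d) := bigw + β • y with hu
    have huval : ∀ i, u i = bigw i + β * y i := by
      intro i
      simp only [hu, PiLp.add_apply, PiLp.smul_apply, smul_eq_mul]
    show u ∈ μ • kSupBall d k
    have hcross : ∀ i, bigw i * y i = 0 := by
      intro i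
      by_cases h : (i : ℕ) < a
      · have : y i = 0 := by
          by_contra hne
          have := (hmemA i).1 (hysupp i hne)
          omega
        rw [this, mul_zero]
      · rw [hbigval, if_neg h, zero_mul]
    have hy2 : ∀ i, (y i)^2 = y i := by
      intro i
      rcases hy01 i with h | h <;> rw [h] <;> ring
    have hysum : ∑ i, y i = ((r : ℝ) + 1) := by
      rw [← Finset.sum_filter_ne_zero Finset.univ]
      have h : ∀ i ∈ Finset.univ.filter (fun i => y i ≠ 0), y i = 1 := by
        intro i hi
        simp only [mem_filter, mem_univ, true_and] at hi
        rcases hy01 i with h | h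
        · exact absurd h hi
        · exact h
      rw [Finset.sum_congr rfl h, Finset.sum_const, hycard]
      push_cast
      ring
    have hbig2 : ∑ i, (bigw i)^2 = ∑ i ∈ Finset.univ.filter (fun i : Fin d => (i : ℕ) < a),
        (w i)^2 := by
      rw [Finset.sum_filter]
      apply Finset.sum_congr rfl
      intro i _
      rw [hbigval]
      by_cases h : (i : ℕ) < a
      · rw [if_pos h, if_pos h]
      · rw [if_neg h, if_neg h]; ring
    have hnormsq : ∀ xx : EuclideanSpace ℝ (Fin d), ‖xx‖^2 = ∑ i, (xx i)^2 := by
      intro xx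
      rw [EuclideanSpace.norm_eq, Real.sq_sqrt (by positivity)]
      apply Finset.sum_congr rfl
      intro i _
      rw [Real.norm_eq_abs, sq_abs]
    have husq : ‖u‖^2 ≤ μ^2 := by
      rw [hnormsq]
      have h : ∀ i, (u i)^2 = (bigw i)^2 + 2 * β * (bigw i * y i) + β^2 * (y i)^2 := by
        intro i; rw [huval]; ring
      rw [Finset.sum_congr rfl (fun i _ => h i)]
      rw [Finset.sum_add_distrib, Finset.sum_add_distrib, ← Finset.mul_sum, ← Finset.mul_sum]
      have hz : ∑ i, (bigw i * y i) = 0 := Finset.sum_eq_zero (fun i _ => hcross i)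
      rw [hz, Finset.sum_congr rfl (fun i _ => hy2 i), hysum, hbig2]
      rw [mul_zero]
      calc _ = (∑ i ∈ Finset.univ.filter (fun i : Fin d => (i : ℕ) < a), (w i)^2)
            + ((r : ℝ) + 1) * β ^ 2 := by ring
      _ ≤ μ^2 := hnormb
    have hunorm : ‖u‖ ≤ μ := by
      nlinarith [norm_nonneg u, hμ]
    refine ⟨μ⁻¹ • u, ?_, smul_inv_smul₀ (ne_of_gt hμ) u⟩
    apply subset_convexHull
    constructor
    · have hsub : (Finset.univ.filter fun i => (μ⁻¹ • u) i ≠ 0) ⊆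
          (Finset.univ.filter (fun i : Fin d => (i : ℕ) < a)) ∪
          (Finset.univ.filter (fun i => y i ≠ 0)) := by
        intro i hi
        simp only [Finset.mem_filter, mem_univ, true_and] at hi; simp only [PiLp.smul_apply, smul_eq_mul] at hi
        have hune : u i ≠ 0 := by
          intro h; apply hi; rw [h, mul_zero]
        rw [Finset.mem_union]
        by_cases h : (i : ℕ) < a
        · left; simp [h]
        · right
          simp only [mem_filter, mem_univ, true_and]
          intro hyi
          apply hune
          rw [huval, hbigval, if_neg h, hyi]
          ring
      calc (Finset.univ.filter fun i => (μ⁻¹ • u) i ≠ 0).card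
          ≤ _ := Finset.card_le_card hsub
      _ ≤ (Finset.univ.filter (fun i : Fin d => (i : ℕ) < a)).card
          + (Finset.univ.filter (fun i => y i ≠ 0)).card := Finset.card_union_le _ _
      _ ≤ a + (r + 1) := by
          apply Nat.add_le_add _ (le_of_eq hycard)
          rw [st12_card (fun m => m < a)]
          calc ((Finset.range d).filter (fun m => m < a)).card
              ≤ (Finset.range a).card := by
                apply Finset.card_le_card
                intro m hm
                simp only [mem_filter, mem_range] at hm ⊢
                exact hm.2
          _ = a := Finset.card_range a
      _ = k := by omega
    · rw [norm_smul]
      rw [Real.norm_eq_abs, abs_of_pos (by positivity : (0:ℝ) < μ⁻¹)]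
      rw [inv_mul_le_iff₀ hμ, mul_one]
      exact hunorm
  have hconvC : Convex ℝ C' := by
    intro y1 hy1 y2 hy2 c1 c2 hc1 hc2 hc12
    show bigw + β • (c1 • y1 + c2 • y2) ∈ μ • kSupBall d k
    have heq : bigw + β • (c1 • y1 + c2 • y2)
        = c1 • (bigw + β • y1) + c2 • (bigw + β • y2) := by
      match_scalars <;> (try ring) <;> linarith
    rw [heq]
    exact hballconv hy1 hy2 hc1 hc2 hc12
  have hxC : x ∈ C' := convexHull_min hVC hconvC hpoly
  have hfinal : bigw + β • x = w := by
    ext i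
    simp only [PiLp.add_apply, PiLp.smul_apply, smul_eq_mul]
    rw [hbigval, hxval]
    by_cases h1 : (i : ℕ) < a
    · have h2 : ¬(a ≤ (i : ℕ) ∧ (i : ℕ) < ℓ) := by omega
      rw [if_pos h1, if_neg h2]
      ring
    · rw [if_neg h1]
      by_cases h2 : (i : ℕ) < ℓ
      · have h3 : a ≤ (i : ℕ) ∧ (i : ℕ) < ℓ := ⟨by omega, h2⟩
        rw [if_pos h3]
        field_simp; ring
      · have h3 : ¬(a ≤ (i : ℕ) ∧ (i : ℕ) < ℓ) := by omega
        rw [if_neg h3]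
        rw [htail i (by omega)]
        ring
  rw [hC'] at hxC
  simp only [Set.mem_setOf_eq] at hxC
  rw [hfinal] at hxC
  exact hxC

end St12Aux

open Finset Pointwise

set_option maxHeartbeats 1000000

/-- correctness of the proximity-operator algorithm. If
`v_1 ≥ … ≥ v_d ≥ 0`, `r ∈ {0,…,k−1}`, `ℓ ∈ {k,…,d}` satisfy (with
`T = ∑_{i=k−r}^ℓ v_i`, `D = ℓ − k + (L+1)r + L + 1`, and the conventions
`v_0 = +∞`, `v_{d+1} = −∞`, i.e. the corresponding inequalities are vacuous when
`r = k−1` resp. `ℓ = d`):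
`(1/(L+1))v_{k−r−1} > T/D ≥ (1/(L+1))v_{k−r}` and `v_ℓ > T/D ≥ v_{ℓ+1}`,
then `q` given by `q_i = (L/(L+1))v_i` for `i ≤ k−r−1`, `q_i = v_i − T/D` for
`k−r ≤ i ≤ ℓ`, `q_i = 0` for `i > ℓ`, is the unique minimizer of
`u ↦ ½‖u − v‖² + (1/(2L))(‖u‖ₖˢᵖ)²`, i.e. `q = prox_{(1/(2L))(‖·‖ₖˢᵖ)²}(v)`. -/


theorem statement12 (d k : ℕ) (hk1 : 1 ≤ k) (hkd : k ≤ d) (L : ℝ) (hL : 0 < L)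
    (v q : EuclideanSpace ℝ (Fin d))
    (hmono : ∀ i j : ℕ, 1 ≤ i → i ≤ j → j ≤ d → ent v j ≤ ent v i)
    (hnn : 0 ≤ ent v d)
    (r ℓ : ℕ) (hr : r < k) (hlk : k ≤ ℓ) (hld : ℓ ≤ d)
    (T D : ℝ) (hT : T = ∑ i ∈ Finset.Icc (k - r) ℓ, ent v i)
    (hD : D = (ℓ : ℝ) - (k : ℝ) + (L + 1) * (r : ℝ) + L + 1)
    (hc1 : r = k - 1 ∨ T / D < 1 / (L + 1) * ent v (k - r - 1))
    (hc2 : 1 / (L + 1) * ent v (k - r) ≤ T / D)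
    (hc3 : T / D < ent v ℓ)
    (hc4 : ℓ = d ∨ ent v (ℓ + 1) ≤ T / D)
    (hq : ∀ i : Fin d, q i =
      if (i : ℕ) + 1 ≤ k - r - 1 then L / (L + 1) * v i
      else if (i : ℕ) + 1 ≤ ℓ then v i - T / D
      else 0) :
    ∀ u : EuclideanSpace ℝ (Fin d), u ≠ q →
      (1 / 2) * ‖q - v‖ ^ 2 + 1 / (2 * L) * kSupNorm d k q ^ 2
        < (1 / 2) * ‖u - v‖ ^ 2 + 1 / (2 * L) * kSupNorm d k u ^ 2 := by
  classical
  -- basic index facts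
  have hL1 : (0:ℝ) < L + 1 := by linarith
  have hd0 : 0 < d := by omega
  set a : ℕ := k - r - 1 with hadef
  have hak : a + r + 1 = k := by omega
  -- `ent`-to-`Fin` translation
  have hent : ∀ (m : ℕ) (h1 : 1 ≤ m) (h2 : m ≤ d), ent v m = v ⟨m - 1, by omega⟩ := by
    intro m h1 h2
    simp only [ent, dif_pos (And.intro h1 h2)]
  have hentf : ∀ i : Fin d, ent v ((i : ℕ) + 1) = v i := by
    intro i
    rw [hent ((i:ℕ)+1) (by omega) i.isLt]
    exact congrArg v (Fin.ext (by simp))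
  have vmono : ∀ i j : Fin d, i ≤ j → v j ≤ v i := by
    intro i j hij
    have hij' : (i:ℕ) ≤ (j:ℕ) := hij
    have h := hmono ((i:ℕ)+1) ((j:ℕ)+1) (by omega) (by omega) j.isLt
    rwa [hentf, hentf] at h
  have vnn : ∀ i : Fin d, 0 ≤ v i := by
    intro i
    have h := hmono ((i:ℕ)+1) d (by omega) i.isLt (le_refl d)
    rw [hentf] at h
    linarith
  set c : ℝ := T / D with hcdef
  have hD0 : (0:ℝ) < D := by
    rw [hD]
    have h1 : (k:ℝ) ≤ (ℓ:ℝ) := by exact_mod_cast hlk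
    have h2 : (0:ℝ) ≤ (r:ℝ) := Nat.cast_nonneg r
    have h3 : (0:ℝ) ≤ (L+1)*(r:ℝ) := mul_nonneg (by linarith) h2
    linarith
  have hva : a < d := by omega
  have hfa : ent v (k - r) = v ⟨a, hva⟩ := by
    have h1 : k - r = a + 1 := by omega
    rw [h1, hent (a+1) (by omega) (by omega)]
    exact congrArg v (Fin.ext (by simp))
  have hfa2 : (1/(L+1)) * v ⟨a, hva⟩ ≤ c := by
    rw [← hfa]
    exact hc2
  have hc2' : v ⟨a, hva⟩ ≤ (L + 1) * c := by
    have h3 := mul_le_mul_of_nonneg_left hfa2 hL1.le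
    have h4 : (L+1)*((1/(L+1)) * v ⟨a, hva⟩) = v ⟨a, hva⟩ := by
      field_simp
    rw [h4] at h3
    exact h3
  have hcnn : 0 ≤ c :=
    le_trans (mul_nonneg (by positivity) (vnn ⟨a, hva⟩)) hfa2
  have hld' : ℓ - 1 < d := by omega
  have hcl : c < v ⟨ℓ - 1, hld'⟩ := by
    rwa [hent ℓ (by omega) hld] at hc3
  have hT0 : 0 < T := by
    rw [hT]
    have hmem : ℓ ∈ Finset.Icc (k - r) ℓ := Finset.mem_Icc.2 ⟨by omega, le_refl ℓ⟩
    have hnn' : ∀ i ∈ Finset.Icc (k - r) ℓ, 0 ≤ ent v i := by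
      intro i hi
      rw [Finset.mem_Icc] at hi
      rw [hent i (by omega) (by omega)]
      exact vnn _
    have h1 : ent v ℓ ≤ ∑ i ∈ Finset.Icc (k - r) ℓ, ent v i :=
      Finset.single_le_sum hnn' hmem
    have h2 : c < ent v ℓ := hc3
    linarith
  have hcpos : 0 < c := by
    rw [hcdef]
    exact div_pos hT0 hD0
  have hTDc : T = D * c := by
    rw [hcdef]
    field_simp
  -- block inequalities
  have hvbig : ∀ i : Fin d, (i : ℕ) < a → (L + 1) * c < v i := by
    intro i hia
    rcases hc1 with h | h
    · omega
    · have ha1 : 1 ≤ a := by omega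
      have hade : a - 1 < d := by omega
      have he : ent v (k - r - 1) = v ⟨a - 1, hade⟩ := by
        have : k - r - 1 = a := by omega
        rw [this, hent a ha1 (by omega)]
      rw [he] at h
      have hle : v ⟨a - 1, hade⟩ ≤ v i := by
        apply vmono
        simp only [Fin.le_def]
        omega
      have h5 := mul_lt_mul_of_pos_left h hL1
      have h6 : (L+1)*(1/(L+1) * v ⟨a - 1, hade⟩) = v ⟨a - 1, hade⟩ := by
        field_simp
      rw [h6] at h5
      linarith
  have hvmid_hi : ∀ i : Fin d, a ≤ (i : ℕ) → v i ≤ (L + 1) * c := by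
    intro i h
    refine le_trans ?_ hc2'
    apply vmono
    simp only [Fin.le_def]
    omega
  have hvmid_lo : ∀ i : Fin d, (i : ℕ) < ℓ → c < v i := by
    intro i h
    refine lt_of_lt_of_le hcl ?_
    apply vmono
    simp only [Fin.le_def]
    omega
  have hvtail : ∀ i : Fin d, ℓ ≤ (i : ℕ) → v i ≤ c := by
    intro i h
    rcases hc4 with h4 | h4
    · exfalso
      have := i.isLt
      omega
    · have hl1 : ℓ < d := by
        have := i.isLt
        omega
      rw [hent (ℓ+1) (by omega) (by omega)] at h4
      refine le_trans ?_ h4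
      apply vmono
      simp only [Fin.le_def]
      simp
      omega
  -- values of q
  have hqbig : ∀ i : Fin d, (i : ℕ) < a → q i = L / (L + 1) * v i := by
    intro i h
    rw [hq i, if_pos (by omega)]
  have hqmid : ∀ i : Fin d, a ≤ (i : ℕ) → (i : ℕ) < ℓ → q i = v i - c := by
    intro i h1 h2
    rw [hq i, if_neg (by omega), if_pos (by omega)]
  have hqtail : ∀ i : Fin d, ℓ ≤ (i : ℕ) → q i = 0 := by
    intro i h
    rw [hq i, if_neg (by omega), if_neg (by omega)]
  -- the dual vector z
  set z : EuclideanSpace ℝ (Fin d) := v - q with hzdef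
  have hzval : ∀ i : Fin d, z i = v i - q i := by
    intro i
    simp only [hzdef, PiLp.sub_apply]
  have hzbig : ∀ i : Fin d, (i : ℕ) < a → z i = v i / (L + 1) := by
    intro i h
    rw [hzval, hqbig i h]
    field_simp
    ring
  have hzmid : ∀ i : Fin d, a ≤ (i : ℕ) → (i : ℕ) < ℓ → z i = c := by
    intro i h1 h2
    rw [hzval, hqmid i h1 h2]
    ring
  have hztail : ∀ i : Fin d, ℓ ≤ (i : ℕ) → z i = v i := by
    intro i h
    rw [hzval, hqtail i h]
    ring
  have znn : ∀ i : Fin d, 0 ≤ z i := by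
    intro i
    by_cases h1 : (i : ℕ) < a
    · rw [hzbig i h1]; exact div_nonneg (vnn i) hL1.le
    · by_cases h2 : (i : ℕ) < ℓ
      · rw [hzmid i (by omega) h2]; exact hcpos.le
      · rw [hztail i (by omega)]; exact vnn i
  have zmono : ∀ i j : Fin d, i ≤ j → z j ≤ z i := by
    intro i j hij
    have hij' : (i:ℕ) ≤ (j:ℕ) := hij
    by_cases hi1 : (i : ℕ) < a
    · have hzi : c < z i := by
        rw [hzbig i hi1]
        rw [lt_div_iff₀ hL1]
        have := hvbig i hi1
        linarith
      by_cases hj1 : (j : ℕ) < a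
      · rw [hzbig i hi1, hzbig j hj1]
        exact (div_le_div_iff_of_pos_right hL1).2 (vmono i j hij)
      · by_cases hj2 : (j : ℕ) < ℓ
        · rw [hzmid j (by omega) hj2]
          linarith
        · rw [hztail j (by omega)]
          have := hvtail j (by omega)
          linarith
    · by_cases hi2 : (i : ℕ) < ℓ
      · rw [hzmid i (by omega) hi2]
        by_cases hj2 : (j : ℕ) < ℓ
        · rw [hzmid j (by omega) hj2]
        · rw [hztail j (by omega)]
          exact hvtail j (by omega)
      · rw [hztail i (by omega), hztail j (by omega)]
        exact vmono i j hij
  -- squared-norm helper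
  have hnormsq : ∀ xx : EuclideanSpace ℝ (Fin d), ‖xx‖^2 = ∑ i, (xx i)^2 := by
    intro xx
    rw [EuclideanSpace.norm_eq, Real.sq_sqrt (by positivity)]
    apply Finset.sum_congr rfl
    intro i _
    rw [Real.norm_eq_abs, sq_abs]
  -- index sets
  set Big : Finset (Fin d) := Finset.univ.filter (fun i : Fin d => (i : ℕ) < a) with hBig
  set Mid : Finset (Fin d) :=
    Finset.univ.filter (fun i : Fin d => a ≤ (i : ℕ) ∧ (i : ℕ) < ℓ) with hMid
  set K : Finset (Fin d) := Finset.univ.filter (fun i : Fin d => (i : ℕ) < k) with hK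
  have hTm : ∑ i ∈ Mid, v i = T := by
    rw [hT]
    apply Finset.sum_bij (i := fun (i : Fin d) _ => (i : ℕ) + 1)
    · intro i hi
      simp only [hMid, Finset.mem_filter, Finset.mem_univ, true_and] at hi
      rw [Finset.mem_Icc]
      omega
    · intro i1 h1 i2 h2 h
      exact Fin.ext (by omega)
    · intro m hm
      rw [Finset.mem_Icc] at hm
      refine ⟨⟨m - 1, by omega⟩, ?_, by show m - 1 + 1 = m; omega⟩
      simp only [hMid, Finset.mem_filter, Finset.mem_univ, true_and]
      show a ≤ m - 1 ∧ m - 1 < ℓ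
      omega
    · intro i hi
      exact (hentf i).symm
  have hMidcard : Mid.card = ℓ - a := by
    rw [hMid, st12_card (fun m => a ≤ m ∧ m < ℓ)]
    have he : (Finset.range d).filter (fun m => a ≤ m ∧ m < ℓ) = Finset.Ico a ℓ := by
      ext m
      simp only [Finset.mem_filter, Finset.mem_range, Finset.mem_Ico]
      omega
    rw [he, Nat.card_Ico]
  -- splitting the top-k sum
  set SB : ℝ := ∑ i ∈ Big, (z i)^2 with hSB
  set P : ℝ := ∑ i ∈ K, (z i)^2 with hP
  have hKsplit : P = SB + ((r:ℝ) + 1) * c^2 := by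
    have hKun : K = Big ∪ Finset.univ.filter (fun i : Fin d => a ≤ (i : ℕ) ∧ (i : ℕ) < k) := by
      ext i
      simp only [hK, hBig, Finset.mem_union, Finset.mem_filter, Finset.mem_univ, true_and]
      omega
    have hdisj : Disjoint Big (Finset.univ.filter (fun i : Fin d => a ≤ (i : ℕ) ∧ (i : ℕ) < k)) := by
      rw [Finset.disjoint_left]
      intro i h1 h2
      simp only [hBig, Finset.mem_filter, Finset.mem_univ, true_and] at h1 h2
      omega
    rw [hP, hKun, Finset.sum_union hdisj, ← hSB]
    congr 1
    have h1 : ∀ i ∈ Finset.univ.filter (fun i : Fin d => a ≤ (i : ℕ) ∧ (i : ℕ) < k),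
        (z i)^2 = c^2 := by
      intro i hi
      simp only [Finset.mem_filter, Finset.mem_univ, true_and] at hi
      rw [hzmid i hi.1 (by omega)]
    rw [Finset.sum_congr rfl h1, Finset.sum_const]
    have hcard2 : (Finset.univ.filter (fun i : Fin d => a ≤ (i : ℕ) ∧ (i : ℕ) < k)).card
        = r + 1 := by
      rw [st12_card (fun m => a ≤ m ∧ m < k)]
      have he : (Finset.range d).filter (fun m => a ≤ m ∧ m < k) = Finset.Ico a k := by
        ext m
        simp only [Finset.mem_filter, Finset.mem_range, Finset.mem_Ico]
        omega
      rw [he, Nat.card_Ico]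
      omega
    rw [hcard2, nsmul_eq_mul]
    push_cast
    ring
  have hSB0 : 0 ≤ SB := by
    rw [hSB]
    apply Finset.sum_nonneg
    intro i _
    positivity
  have hPpos : 0 < P := by
    rw [hKsplit]
    have h1 : (0:ℝ) < ((r:ℝ) + 1) * c^2 := by positivity
    linarith
  set N : ℝ := Real.sqrt P with hNdef
  have hN2 : N^2 = P := Real.sq_sqrt hPpos.le
  have hNpos : 0 < N := Real.sqrt_pos.2 hPpos
  -- dual-norm bound on the ball
  have khalf : ∀ ww ∈ kSupBall d k, (∑ i, z i * ww i) ≤ N := by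
    have hhalf : kSupBall d k ⊆ {y : EuclideanSpace ℝ (Fin d) | (∑ i, z i * y i) ≤ N} := by
      apply convexHull_min
      · rintro y ⟨hycard, hynorm⟩
        show (∑ i, z i * y i) ≤ N
        set Ay : Finset (Fin d) := Finset.univ.filter (fun i => y i ≠ 0) with hAy
        have h1 : ∑ i, z i * y i = ∑ i ∈ Ay, z i * y i := by
          symm
          apply Finset.sum_subset (Finset.filter_subset _ _)
          intro i _ hi
          simp only [hAy, Finset.mem_filter, Finset.mem_univ, true_and, not_not] at hi
          rw [hi, mul_zero]
        have h2 : ∑ i ∈ Ay, z i * y i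
            ≤ Real.sqrt (∑ i ∈ Ay, (z i)^2) * Real.sqrt (∑ i ∈ Ay, (y i)^2) :=
          Real.sum_mul_le_sqrt_mul_sqrt _ _ _
        have h3 : ∑ i ∈ Ay, (z i)^2 ≤ P := by
          rw [hP]
          exact st12_topk hk1 hkd (fun i => z i) zmono znn Ay hycard
        have h4 : ∑ i ∈ Ay, (y i)^2 ≤ 1 := by
          have h5 : ∑ i ∈ Ay, (y i)^2 ≤ ∑ i, (y i)^2 :=
            Finset.sum_le_sum_of_subset_of_nonneg (Finset.filter_subset _ _)
              (fun i _ _ => sq_nonneg _)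
          have h6 := hnormsq y
          nlinarith [hynorm, norm_nonneg y]
        calc ∑ i, z i * y i = ∑ i ∈ Ay, z i * y i := h1
        _ ≤ Real.sqrt (∑ i ∈ Ay, (z i)^2) * Real.sqrt (∑ i ∈ Ay, (y i)^2) := h2
        _ ≤ N * 1 := by
            apply mul_le_mul
            · rw [hNdef]
              exact Real.sqrt_le_sqrt h3
            · rw [show (1:ℝ) = Real.sqrt 1 from (Real.sqrt_one).symm]
              exact Real.sqrt_le_sqrt h4
            · positivity
            · exact hNpos.le
        _ = N := mul_one N
      · intro y1 hy1 y2 hy2 c1 c2 hc1' hc2' hc12'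
        simp only [Set.mem_setOf_eq] at hy1 hy2 ⊢
        have he : ∑ i, z i * ((c1 • y1 + c2 • y2) i)
            = c1 * (∑ i, z i * y1 i) + c2 * (∑ i, z i * y2 i) := by
          rw [Finset.mul_sum, Finset.mul_sum, ← Finset.sum_add_distrib]
          apply Finset.sum_congr rfl
          intro i _
          simp only [PiLp.add_apply, PiLp.smul_apply, smul_eq_mul]
          ring
        rw [he]
        nlinarith [hy1, hy2]
    intro ww hww
    exact hhalf hww
  have key1 : ∀ uu : EuclideanSpace ℝ (Fin d),
      (∑ i, z i * uu i) ≤ gauge (kSupBall d k) uu * N :=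
    st12_gauge hk1 (fun i => z i) N hNpos khalf
  -- the cast of a
  have hacast : (a:ℝ) = (k:ℝ) - (r:ℝ) - 1 := by
    have h : ((a + r + 1 : ℕ) : ℝ) = (k:ℝ) := by exact_mod_cast congrArg (Nat.cast : ℕ → ℝ) hak
    push_cast at h
    linarith
  have hDa : D = ((ℓ:ℝ) - (a:ℝ)) + L * ((r:ℝ) + 1) := by
    rw [hD, hacast]
    ring
  have hsumMidq : ∑ i ∈ Mid, q i = ((r:ℝ) + 1) * (L * c) := by
    have h1 : ∀ i ∈ Mid, q i = v i - c := by
      intro i hi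
      simp only [hMid, Finset.mem_filter, Finset.mem_univ, true_and] at hi
      exact hqmid i hi.1 hi.2
    rw [Finset.sum_congr rfl h1, Finset.sum_sub_distrib, hTm, Finset.sum_const, hMidcard,
      nsmul_eq_mul]
    have hcast2 : ((ℓ - a : ℕ) : ℝ) = (ℓ:ℝ) - (a:ℝ) := by
      have : a ≤ ℓ := by omega
      push_cast [this]
      ring
    rw [hcast2, hTDc, hDa]
    ring
  -- kSupNorm q ≤ L * N
  have key2 : kSupNorm d k q ≤ L * N := by
    have hmem : q ∈ (L * N) • kSupBall d k := by
      apply st12_mem hk1 hkd a r ℓ hak hlk hld q (L * c) (by positivity) hqtail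
      · intro i h1 h2
        rw [hqmid i h1 h2]
        constructor
        · have := hvmid_lo i h2
          linarith
        · have := hvmid_hi i h1
          linarith
      · rw [← hMid]
        exact hsumMidq
      · positivity
      · rw [← hBig]
        have h1 : ∀ i ∈ Big, (q i)^2 = L^2 * (z i)^2 := by
          intro i hi
          simp only [hBig, Finset.mem_filter, Finset.mem_univ, true_and] at hi
          rw [hqbig i hi, hzbig i hi]
          ring
        rw [Finset.sum_congr rfl h1, ← Finset.mul_sum, ← hSB]
        have h2 : (L * N)^2 = L^2 * (SB + ((r:ℝ) + 1) * c^2) := by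
          rw [show (L*N)^2 = L^2 * N^2 from by ring, hN2, hKsplit]
        rw [h2]
        apply le_of_eq
        ring
    show gauge (kSupBall d k) q ≤ L * N
    exact gauge_le_of_mem (by positivity) hmem
  -- the key equality ⟨z, q⟩ = L * P
  have key3 : ∑ i, z i * q i = L * P := by
    set Tail : Finset (Fin d) := Finset.univ.filter (fun i : Fin d => ℓ ≤ (i : ℕ)) with hTail
    have hun : (Finset.univ : Finset (Fin d)) = (Big ∪ Mid) ∪ Tail := by
      ext i
      simp only [hBig, hMid, hTail, Finset.mem_union, Finset.mem_filter, Finset.mem_univ,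
        true_and, true_iff]
      omega
    have hd1 : Disjoint Big Mid := by
      rw [Finset.disjoint_left]
      intro i h1 h2
      simp only [hBig, hMid, Finset.mem_filter, Finset.mem_univ, true_and] at h1 h2
      omega
    have hd2 : Disjoint (Big ∪ Mid) Tail := by
      rw [Finset.disjoint_left]
      intro i h1 h2
      simp only [hBig, hMid, hTail, Finset.mem_union, Finset.mem_filter, Finset.mem_univ,
        true_and] at h1 h2
      omega
    rw [hun, Finset.sum_union hd2, Finset.sum_union hd1]
    have hB : ∑ i ∈ Big, z i * q i = L * SB := by
      rw [hSB, Finset.mul_sum]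
      apply Finset.sum_congr rfl
      intro i hi
      simp only [hBig, Finset.mem_filter, Finset.mem_univ, true_and] at hi
      rw [hqbig i hi, hzbig i hi]
      ring
    have hM : ∑ i ∈ Mid, z i * q i = c * (((r:ℝ) + 1) * (L * c)) := by
      have h1 : ∀ i ∈ Mid, z i * q i = c * q i := by
        intro i hi
        simp only [hMid, Finset.mem_filter, Finset.mem_univ, true_and] at hi
        rw [hzmid i hi.1 hi.2]
      rw [Finset.sum_congr rfl h1, ← Finset.mul_sum, hsumMidq]
    have hTt : ∑ i ∈ Tail, z i * q i = 0 := by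
      apply Finset.sum_eq_zero
      intro i hi
      simp only [hTail, Finset.mem_filter, Finset.mem_univ, true_and] at hi
      rw [hqtail i hi, mul_zero]
    rw [hB, hM, hTt, hKsplit]
    ring
  -- final assembly
  intro u hu
  have hGu := key1 u
  have hGu0 : 0 ≤ gauge (kSupBall d k) u := gauge_nonneg u
  have hGq0 : 0 ≤ kSupNorm d k q := gauge_nonneg q
  have F0 : ‖q - v‖ = ‖z‖ := by
    rw [norm_sub_rev]
  have F5 : ‖u - v‖^2 = ‖u - q‖^2 + 2*(∑ i, z i * v i) - ‖z‖^2 - 2*(∑ i, z i * u i) := by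
    rw [hnormsq, hnormsq, hnormsq]
    rw [Finset.mul_sum, Finset.mul_sum, ← Finset.sum_add_distrib, ← Finset.sum_sub_distrib,
      ← Finset.sum_sub_distrib]
    apply Finset.sum_congr rfl
    intro i _
    have hz := hzval i
    simp only [PiLp.sub_apply]
    rw [hz]
    ring
  set Gu : ℝ := kSupNorm d k u with hGudef
  set Gq : ℝ := kSupNorm d k q with hGqdef
  have hGu' : (∑ i, z i * u i) ≤ Gu * N := hGu
  have F1 : L * (∑ i, z i * u i) ≤ L * (Gu * N) :=
    mul_le_mul_of_nonneg_left hGu' hL.le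
  have F2 : 2*L*(Gu * N) ≤ Gu^2 + L^2 * P := by
    have h1 : (Gu - L*N)^2 = Gu^2 - 2*L*(Gu*N) + L^2*N^2 := by ring
    have h2 := sq_nonneg (Gu - L*N)
    rw [h1] at h2
    have h3 : L^2 * N^2 = L^2 * P := by rw [hN2]
    linarith
  have F3 : ∑ i, z i * v i = L*P + ‖z‖^2 := by
    have h1 : ∑ i, z i * v i = ∑ i, z i * q i + ∑ i, (z i)^2 := by
      rw [← Finset.sum_add_distrib]
      apply Finset.sum_congr rfl
      intro i _
      have hz := hzval i
      rw [hz]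
      ring
    rw [h1, key3, hnormsq z]
  have F3L : L * (∑ i, z i * v i) = L^2*P + L*‖z‖^2 := by
    rw [F3]
    ring
  have F4 : Gq^2 ≤ L^2 * P := by
    have h1 : Gq^2 ≤ (L*N)^2 := pow_le_pow_left₀ hGq0 key2 2
    have h2 : (L*N)^2 = L^2*P := by
      rw [show (L*N)^2 = L^2*N^2 from by ring, hN2]
    linarith
  have F5L : L*‖u - v‖^2
      = L*‖u - q‖^2 + 2*L*(∑ i, z i * v i) - L*‖z‖^2 - 2*L*(∑ i, z i * u i) := by
    rw [F5]
    ring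
  have F6 : 0 < ‖u - q‖^2 := by
    have h1 : u - q ≠ 0 := sub_ne_zero.2 hu
    have h2 : 0 < ‖u - q‖ := norm_pos_iff.2 h1
    positivity
  have F6L : 0 < L * ‖u - q‖^2 := mul_pos hL F6
  have h2L : (0:ℝ) < 2*L := by linarith
  rw [← mul_lt_mul_iff_of_pos_left h2L]
  have he : ∀ X Y : ℝ, 2*L*((1/2)*X + 1/(2*L)*Y) = L*X + Y := by
    intro X Y
    field_simp
  rw [he, he]
  have F0' : ‖q - v‖^2 = ‖z‖^2 := by rw [F0]
  rw [F0']
  linarith [F1, F2, F3L, F4, F5L, F6L]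
end

section
/- Let X ∈ ℝ^{n×d}, y ∈ ℝ^n, λ₁, λ₂ > 0, and suppose ŵ ≠ 0 minimizes the elastic-net objective w ↦ (1/2)‖Xw − y‖₂² + λ₁‖w‖₁ + λ₂‖w‖₂² over ℝ^d. Set k := (‖ŵ‖₁ / ‖ŵ‖₂)², which lies in [1, d]. Then ŵ minimizes ‖Xw − y‖₂² over the set {w ∈ ℝ^d : max{‖w‖₂, ‖w‖₁/√k} ≤ max{‖ŵ‖₂, ‖ŵ‖₁/√k}}. -/
/-- if `ŵ ≠ 0` minimizes the elastic-net objective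
`w ↦ ½‖Xw − y‖² + λ₁‖w‖₁ + λ₂‖w‖₂²` and `k := (‖ŵ‖₁/‖ŵ‖₂)²`, then `k ∈ [1, d]`
and `ŵ` minimizes `‖Xw − y‖²` over `{w : ‖w‖ₖᵉˡ ≤ ‖w‖ₖᵉˡ}`, where
`‖w‖ₖᵉˡ = max{‖w‖₂, ‖w‖₁/√k}`. -/
theorem statement13 (n d : ℕ) (X : Fin n → Fin d → ℝ) (y : Fin n → ℝ)
    (l1 l2 : ℝ) (hl1 : 0 < l1) (hl2 : 0 < l2)
    (what : Fin d → ℝ) (hne : what ≠ 0)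
    (hmin : ∀ w : Fin d → ℝ,
      (1 / 2) * (∑ j, ((∑ i, X j i * what i) - y j) ^ 2)
          + l1 * ∑ i, |what i| + l2 * ∑ i, what i ^ 2
        ≤ (1 / 2) * (∑ j, ((∑ i, X j i * w i) - y j) ^ 2)
          + l1 * ∑ i, |w i| + l2 * ∑ i, w i ^ 2)
    (kk : ℝ)
    (hkk : kk = ((∑ i, |what i|) / Real.sqrt (∑ i, what i ^ 2)) ^ 2) :
    kk ∈ Set.Icc (1 : ℝ) (d : ℝ) ∧
    ∀ w : Fin d → ℝ,
      max (Real.sqrt (∑ i, w i ^ 2)) ((∑ i, |w i|) / Real.sqrt kk)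
        ≤ max (Real.sqrt (∑ i, what i ^ 2)) ((∑ i, |what i|) / Real.sqrt kk) →
      ∑ j, ((∑ i, X j i * what i) - y j) ^ 2 ≤ ∑ j, ((∑ i, X j i * w i) - y j) ^ 2 := by
  set S1 : ℝ := ∑ i, |what i| with hS1
  set S2 : ℝ := ∑ i, what i ^ 2 with hS2
  have hS2pos : 0 < S2 := by
    obtain ⟨i, hi⟩ := Function.ne_iff.mp hne
    exact Finset.sum_pos' (fun j _ => sq_nonneg _)
      ⟨i, Finset.mem_univ i, lt_of_le_of_ne (sq_nonneg _) (Ne.symm (pow_ne_zero 2 hi))⟩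
  have hS1nonneg : 0 ≤ S1 := Finset.sum_nonneg fun i _ => abs_nonneg _
  have hS2le : S2 ≤ S1 ^ 2 := by
    have := Finset.sum_sq_le_sq_sum_of_nonneg (s := Finset.univ)
      (f := fun i => |what i|) (fun i _ => abs_nonneg _)
    simpa [sq_abs] using this
  have hCS : S1 ^ 2 ≤ (d : ℝ) * S2 := by
    have := sq_sum_le_card_mul_sum_sq (s := Finset.univ) (f := fun i => |what i|)
    simpa [sq_abs] using this
  have hS1pos : 0 < S1 := lt_of_lt_of_le (Real.sqrt_pos.mpr hS2pos)
    (by nlinarith [Real.sq_sqrt hS2pos.le, Real.sqrt_nonneg S2])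
  have hsqS2pos : 0 < Real.sqrt S2 := Real.sqrt_pos.mpr hS2pos
  have hkk' : kk = S1 ^ 2 / S2 := by
    rw [hkk, div_pow, Real.sq_sqrt hS2pos.le]
  have hkkmem : kk ∈ Set.Icc (1 : ℝ) (d : ℝ) := by
    constructor
    · rw [hkk']; rw [le_div_iff₀ hS2pos]; linarith
    · rw [hkk']; rw [div_le_iff₀ hS2pos]; linarith
  refine ⟨hkkmem, fun w hw => ?_⟩
  have hsqrtkk : Real.sqrt kk = S1 / Real.sqrt S2 := by
    rw [hkk]; exact Real.sqrt_sq (by positivity)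
  have hrhs : S1 / Real.sqrt kk = Real.sqrt S2 := by
    rw [hsqrtkk]
    field_simp
  have hwhat2 : Real.sqrt S2 ≤ Real.sqrt S2 := le_rfl
  rw [hrhs, max_self] at hw
  have h2 : Real.sqrt (∑ i, w i ^ 2) ≤ Real.sqrt S2 := le_trans (le_max_left _ _) hw
  have h1 : (∑ i, |w i|) / Real.sqrt kk ≤ Real.sqrt S2 := le_trans (le_max_right _ _) hw
  have hw2 : ∑ i, w i ^ 2 ≤ S2 := by
    nlinarith [Real.sq_sqrt (Finset.sum_nonneg (fun i (_ : i ∈ Finset.univ) => sq_nonneg (w i))),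
      Real.sq_sqrt hS2pos.le, Real.sqrt_nonneg (∑ i, w i ^ 2), Real.sqrt_nonneg S2]
  have hw1 : ∑ i, |w i| ≤ S1 := by
    have hkkpos : 0 < Real.sqrt kk := by rw [hsqrtkk]; positivity
    have := (div_le_iff₀ hkkpos).mp h1
    rw [hsqrtkk] at this
    calc ∑ i, |w i| ≤ Real.sqrt S2 * (S1 / Real.sqrt S2) := this
      _ = S1 := by field_simp
  have := hmin w
  nlinarith [this, hl1.le, hl2.le]
end

section
/- For every integer 1 ≤ k ≤ d and every w ∈ ℝ^d, (1/2)(‖w‖_k^sp)² = max{ ⟨u, w⟩ − (1/2)( ∑_{i=1}^k (|u|↓_i)² ) : u ∈ ℝ^d }, i.e. half the squared k-support norm is the Fenchel conjugate of half the squared ℓ2 norm of the k largest-magnitude entries. -/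
open Finset Pointwise

namespace S16

variable {d k : ℕ}

noncomputable def sg (u : Fin d → ℝ) : Equiv.Perm (Fin d) := Tuple.sort (fun j => |u j|)

def topIdx (d k : ℕ) : Finset (Fin d) := Finset.univ.filter (fun j => d - k ≤ j.val)

noncomputable def Tset (k : ℕ) (u : Fin d → ℝ) : Finset (Fin d) := (topIdx d k).image (sg u)

noncomputable def topSum (k : ℕ) (u : Fin d → ℝ) : ℝ := ∑ j ∈ Tset k u, u j ^ 2

lemma topIdx_eq (hkd : k ≤ d) :
    topIdx d k = Finset.image (fun m : Fin k => (⟨d - k + m.1, by omega⟩ : Fin d)) univ := by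
  ext j
  simp only [topIdx, mem_filter, mem_univ, true_and, mem_image]
  constructor
  · intro h
    refine ⟨⟨j.1 - (d - k), by omega⟩, ?_⟩
    apply Fin.ext; simp; omega
  · rintro ⟨m, rfl⟩; simp

lemma card_topIdx (hkd : k ≤ d) : (topIdx d k).card = k := by
  rw [topIdx_eq hkd, Finset.card_image_of_injective _ (fun a b h => by
    apply Fin.ext
    have := congrArg Fin.val h
    simp at this
    omega)]
  simp

lemma card_Tset_le (hkd : k ≤ d) (u : Fin d → ℝ) : (Tset k u).card ≤ k :=
  (Finset.card_image_le).trans (le_of_eq (card_topIdx hkd))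

lemma mono_sq (u : Fin d → ℝ) : Monotone (fun j => u (sg u j) ^ 2) := by
  intro a b hab
  have h := Tuple.monotone_sort (fun j => |u j|) hab
  simp only [Function.comp] at h
  have h1 : u (sg u a) ^ 2 = |u (sg u a)| ^ 2 := (sq_abs _).symm
  have h2 : u (sg u b) ^ 2 = |u (sg u b)| ^ 2 := (sq_abs _).symm
  show u (sg u a) ^ 2 ≤ u (sg u b) ^ 2
  rw [h1, h2]
  exact pow_le_pow_left₀ (abs_nonneg _) h 2

lemma strictMono_fin_le {c : ℕ} {f : Fin c → Fin d} (hf : StrictMono f) :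
    ∀ n : ℕ, ∀ m : Fin c, m.1 = n → n ≤ (f m).1 := by
  intro n
  induction n with
  | zero => omega
  | succ p ih =>
    intro m hm
    have hp : p < c := by omega
    have h1 : (⟨p, hp⟩ : Fin c) < m := by simp [Fin.lt_def, hm]
    have h2 := hf h1
    have h3 := ih ⟨p, hp⟩ rfl
    simp only [Fin.lt_def] at h2
    omega

lemma strictMono_fin_ge {c : ℕ} {f : Fin c → Fin d} (hf : StrictMono f) (m : Fin c) :
    (f m).1 ≤ d - c + m.1 := by
  have hmono : StrictMono (fun mm : Fin c => (f mm.rev).rev) := by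
    intro a b hab
    exact Fin.rev_lt_rev.mpr (hf (Fin.rev_lt_rev.mpr hab))
  have h1 := strictMono_fin_le hmono (m.rev.1) m.rev rfl
  rw [Fin.rev_rev] at h1
  have h2 : m.rev.1 = c - (m.1 + 1) := Fin.val_rev m
  have h3 : ((f m).rev).1 = d - ((f m).1 + 1) := Fin.val_rev _
  have h4 : (f m).1 < d := (f m).2
  have h5 : m.1 < c := m.2
  omega

lemma sum_le_topIdx {g : Fin d → ℝ} (hg : Monotone g) (hg0 : ∀ j, 0 ≤ g j) (hkd : k ≤ d)
    (S : Finset (Fin d)) (hS : S.card ≤ k) : ∑ j ∈ S, g j ≤ ∑ j ∈ topIdx d k, g j := by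
  set c := S.card with hc
  have hcd : c ≤ d := le_trans hS hkd
  have himg : S = Finset.image (S.orderEmbOfFin hc.symm) univ := by
    ext x
    simp only [mem_image, mem_univ, true_and]
    constructor
    · intro hx
      have : x ∈ Set.range (S.orderEmbOfFin hc.symm) := by
        rw [Finset.range_orderEmbOfFin]; exact hx
      obtain ⟨m, hm⟩ := this
      exact ⟨m, hm⟩
    · rintro ⟨m, rfl⟩
      exact Finset.orderEmbOfFin_mem _ _ _
  rw [himg, Finset.sum_image (fun a _ b _ h => (S.orderEmbOfFin hc.symm).injective h)]
  have step1 : ∑ m : Fin c, g (S.orderEmbOfFin hc.symm m) ≤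
      ∑ m : Fin c, g ⟨d - c + m.1, by omega⟩ := by
    apply Finset.sum_le_sum
    intro m _
    apply hg
    rw [Fin.le_def]
    exact strictMono_fin_ge (S.orderEmbOfFin hc.symm).strictMono m
  refine step1.trans ?_
  have step2 : ∑ m : Fin c, g ⟨d - c + m.1, by omega⟩ =
      ∑ j ∈ Finset.image (fun m : Fin c => (⟨d - c + m.1, by omega⟩ : Fin d)) univ, g j := by
    rw [Finset.sum_image (fun a _ b _ h => by
      apply Fin.ext
      have := congrArg Fin.val h
      simp at this
      omega)]
  rw [step2]
  apply Finset.sum_le_sum_of_subset_of_nonneg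
  · intro j hj
    simp only [mem_image, mem_univ, true_and] at hj
    obtain ⟨m, rfl⟩ := hj
    simp only [topIdx, mem_filter, mem_univ, true_and]
    omega
  · intro j _ _
    exact hg0 j

lemma sum_sq_le_topSum (hkd : k ≤ d) (u : Fin d → ℝ) {S : Finset (Fin d)} (hS : S.card ≤ k) :
    ∑ j ∈ S, u j ^ 2 ≤ topSum k u := by
  have h1 : ∑ j ∈ S, u j ^ 2 = ∑ j ∈ S.image (sg u).symm, u (sg u j) ^ 2 := by
    rw [Finset.sum_image (fun a _ b _ h => (sg u).symm.injective h)]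
    apply Finset.sum_congr rfl
    intro a _
    rw [Equiv.apply_symm_apply]
  have h2 : topSum k u = ∑ j ∈ topIdx d k, u (sg u j) ^ 2 := by
    rw [topSum, Tset, Finset.sum_image (fun a _ b _ h => (sg u).injective h)]
  rw [h1, h2]
  exact sum_le_topIdx (mono_sq u) (fun j => sq_nonneg _) hkd _
    ((Finset.card_image_le).trans hS)

lemma topSum_nonneg (k : ℕ) (u : Fin d → ℝ) : 0 ≤ topSum k u :=
  Finset.sum_nonneg fun j _ => sq_nonneg _

lemma sq_le_topSum (hk1 : 1 ≤ k) (hkd : k ≤ d) (u : Fin d → ℝ) (j : Fin d) :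
    u j ^ 2 ≤ topSum k u := by
  have := sum_sq_le_topSum hkd u (S := {j}) (by simpa using hk1)
  simpa using this

lemma sum_zD_sq (hk1 : 1 ≤ k) (hkd : k ≤ d) (u : Fin d → ℝ) :
    ∑ i ∈ Finset.Icc 1 k, zD u i ^ 2 = topSum k u := by
  have hd0 : 0 < d := lt_of_lt_of_le hk1 hkd
  have h2 : topSum k u = ∑ j ∈ topIdx d k, u (sg u j) ^ 2 := by
    rw [topSum, Tset, Finset.sum_image (fun a _ b _ h => (sg u).injective h)]
  rw [h2]
  refine Finset.sum_nbij' (fun n => (⟨d - min (max n 1) d, by omega⟩ : Fin d))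
    (fun jj => d - jj.1) ?_ ?_ ?_ ?_ ?_
  · intro a ha
    simp only [mem_Icc] at ha
    simp only [topIdx, mem_filter, mem_univ, true_and]
    omega
  · intro a ha
    simp only [topIdx, mem_filter, mem_univ, true_and] at ha
    simp only [mem_Icc]
    have := a.2
    omega
  · intro a ha
    simp only [mem_Icc] at ha
    show d - (⟨d - min (max a 1) d, by omega⟩ : Fin d).1 = a
    simp only
    omega
  · intro a ha
    simp only [topIdx, mem_filter, mem_univ, true_and] at ha
    apply Fin.ext
    have := a.2
    show (d - min (max (d - a.1) 1) d : ℕ) = a.1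
    omega
  · intro a ha
    simp only [mem_Icc] at ha
    rw [zD, dif_pos ⟨ha.1, le_trans ha.2 hkd⟩, absDown]
    have hrev : (⟨a - 1, by omega⟩ : Fin d).rev = ⟨d - min (max a 1) d, by omega⟩ := by
      apply Fin.ext
      rw [Fin.val_rev]
      simp
      omega
    rw [hrev, sq_abs]
    rfl

lemma topSum_smul (hkd : k ≤ d) (c : ℝ) (u : Fin d → ℝ) :
    topSum k (fun j => c * u j) = c ^ 2 * topSum k u := by
  apply le_antisymm
  · have h1 : topSum k (fun j => c * u j) = c ^ 2 * ∑ j ∈ Tset k (fun j => c * u j), u j ^ 2 := by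
      rw [topSum, Finset.mul_sum]
      exact Finset.sum_congr rfl fun j _ => by ring
    rw [h1]
    exact mul_le_mul_of_nonneg_left
      (sum_sq_le_topSum hkd u (card_Tset_le hkd _)) (sq_nonneg c)
  · have h1 : c ^ 2 * topSum k u = ∑ j ∈ Tset k u, (c * u j) ^ 2 := by
      rw [topSum, Finset.mul_sum]
      exact Finset.sum_congr rfl fun j _ => by ring
    rw [h1]
    exact sum_sq_le_topSum hkd (fun j => c * u j) (card_Tset_le hkd u)


noncomputable def kSupBall' (d k : ℕ) : Set (EuclideanSpace ℝ (Fin d)) :=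
  convexHull ℝ {w | (Finset.univ.filter fun i => w i ≠ 0).card ≤ k ∧ ‖w‖ ≤ 1}

lemma sum_mul_le_topk (hkd : k ≤ d) (u v : Fin d → ℝ)
    (hsp : (Finset.univ.filter fun i => v i ≠ 0).card ≤ k)
    (hv : ∑ j, v j ^ 2 ≤ 1) : ∑ j, u j * v j ≤ Real.sqrt (topSum k u) := by
  classical
  set F := Finset.univ.filter fun i => v i ≠ 0 with hF
  have h0 : ∑ j ∈ F, u j * v j = ∑ j, u j * v j := by
    apply Finset.sum_filter_of_ne
    intro j _ h
    intro hv0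
    exact h (by rw [hv0, mul_zero])
  have hcs := Finset.sum_mul_sq_le_sq_mul_sq F u v
  have hu2 : ∑ j ∈ F, u j ^ 2 ≤ topSum k u := sum_sq_le_topSum hkd u hsp
  have hv2 : ∑ j ∈ F, v j ^ 2 ≤ 1 := by
    refine le_trans ?_ hv
    apply Finset.sum_le_sum_of_subset_of_nonneg (Finset.filter_subset _ _)
    intro j _ _; exact sq_nonneg _
  have hsq : (∑ j, u j * v j) ^ 2 ≤ topSum k u := by
    rw [← h0]
    calc (∑ j ∈ F, u j * v j) ^ 2 ≤ (∑ j ∈ F, u j ^ 2) * ∑ j ∈ F, v j ^ 2 := hcs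
    _ ≤ topSum k u := by
        nlinarith [Finset.sum_nonneg (fun j (_ : j ∈ F) => sq_nonneg (u j)),
          Finset.sum_nonneg (fun j (_ : j ∈ F) => sq_nonneg (v j)), topSum_nonneg k u]
  calc ∑ j, u j * v j ≤ |∑ j, u j * v j| := le_abs_self _
  _ = Real.sqrt ((∑ j, u j * v j) ^ 2) := (Real.sqrt_sq_eq_abs _).symm
  _ ≤ Real.sqrt (topSum k u) := Real.sqrt_le_sqrt hsq

lemma norm_sq_sum (v : EuclideanSpace ℝ (Fin d)) : ‖v‖ = Real.sqrt (∑ j, v j ^ 2) := by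
  rw [EuclideanSpace.norm_eq]
  congr 1
  exact Finset.sum_congr rfl fun j _ => by rw [Real.norm_eq_abs, sq_abs]

lemma exists_attain (hkd : k ≤ d) (u : Fin d → ℝ) :
    ∃ v : EuclideanSpace ℝ (Fin d), (Finset.univ.filter fun i => v i ≠ 0).card ≤ k ∧ ‖v‖ ≤ 1 ∧
      ∑ j, u j * v j = Real.sqrt (topSum k u) := by
  classical
  by_cases h0 : topSum k u = 0
  · refine ⟨0, ?_, ?_, ?_⟩
    · simp
    · simp
    · simp [h0]
  · set t := Real.sqrt (topSum k u) with ht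
    have htop : 0 < topSum k u := lt_of_le_of_ne (topSum_nonneg k u) (Ne.symm h0)
    have htpos : 0 < t := Real.sqrt_pos.mpr htop
    set v : EuclideanSpace ℝ (Fin d) := WithLp.toLp 2 (fun j => if j ∈ Tset k u then u j / t else 0) with hv
    have happ : ∀ j, v j = if j ∈ Tset k u then u j / t else 0 := fun j => rfl
    refine ⟨v, ?_, ?_, ?_⟩
    · refine le_trans (Finset.card_le_card ?_) (card_Tset_le hkd u)
      intro j hj
      simp only [Finset.mem_filter, Finset.mem_univ, true_and, happ] at hj
      by_contra hnot
      exact hj (by rw [if_neg hnot])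
    · rw [norm_sq_sum]
      have : ∑ j, v j ^ 2 = 1 := by
        have h1 : ∑ j, v j ^ 2 = ∑ j ∈ Tset k u, (u j / t) ^ 2 := by
          rw [← Finset.sum_filter_of_ne (s := Finset.univ) (p := fun j => j ∈ Tset k u)]
          · apply Finset.sum_congr
            · ext j; simp
            · intro j hj
              rw [happ, if_pos hj]
          · intro j _ hne
            by_contra hnot
            exact hne (by rw [happ, if_neg hnot]; ring)
        rw [h1]
        have h2 : ∑ j ∈ Tset k u, (u j / t) ^ 2 = (∑ j ∈ Tset k u, u j ^ 2) / t ^ 2 := by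
          rw [Finset.sum_div]
          exact Finset.sum_congr rfl fun j _ => by ring
        rw [h2, ht, Real.sq_sqrt (le_of_lt htop)]
        exact div_self (ne_of_gt htop)
      rw [this, Real.sqrt_one]
    · have h1 : ∑ j, u j * v j = ∑ j ∈ Tset k u, u j * (u j / t) := by
        rw [← Finset.sum_filter_of_ne (s := Finset.univ) (p := fun j => j ∈ Tset k u)]
        · apply Finset.sum_congr
          · ext j; simp
          · intro j hj
            rw [happ, if_pos hj]
        · intro j _ hne
          by_contra hnot
          exact hne (by rw [happ, if_neg hnot]; ring)
      rw [h1]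
      have h2 : ∑ j ∈ Tset k u, u j * (u j / t) = (topSum k u) / t := by
        rw [topSum, Finset.sum_div]
        exact Finset.sum_congr rfl fun j _ => by ring
      rw [h2, ht]
      exact Real.div_sqrt

lemma hull_bound (hkd : k ≤ d) (u : Fin d → ℝ) :
    ∀ x ∈ kSupBall' d k, ∑ j, u j * x j ≤ Real.sqrt (topSum k u) := by
  intro x hx
  have hlin : IsLinearMap ℝ (fun x : EuclideanSpace ℝ (Fin d) => ∑ j, u j * x j) := by
    constructor
    · intro a b
      rw [← Finset.sum_add_distrib]
      exact Finset.sum_congr rfl fun j _ => by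
        rw [PiLp.add_apply]; ring
    · intro c a
      rw [Finset.smul_sum]
      exact Finset.sum_congr rfl fun j _ => by
        rw [PiLp.smul_apply, smul_eq_mul, smul_eq_mul]; ring
  have hconv : Convex ℝ {x : EuclideanSpace ℝ (Fin d) | ∑ j, u j * x j ≤ Real.sqrt (topSum k u)} :=
    convex_halfSpace_le hlin _
  have hsub : {w : EuclideanSpace ℝ (Fin d) |
      (Finset.univ.filter fun i => w i ≠ 0).card ≤ k ∧ ‖w‖ ≤ 1} ⊆
      {x : EuclideanSpace ℝ (Fin d) | ∑ j, u j * x j ≤ Real.sqrt (topSum k u)} := by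
    rintro v ⟨hv1, hv2⟩
    have hv3 : ∑ j, v j ^ 2 ≤ 1 := by
      have := norm_sq_sum v
      have hnn : 0 ≤ ∑ j, v j ^ 2 := Finset.sum_nonneg fun j _ => sq_nonneg _
      nlinarith [Real.sq_sqrt hnn, norm_nonneg v]
    exact sum_mul_le_topk hkd u v hv1 hv3
  exact convexHull_min hsub hconv hx

lemma isCompact_convexJoin {s t : Set (EuclideanSpace ℝ (Fin d))}
    (hs : IsCompact s) (ht : IsCompact t) : IsCompact (convexJoin ℝ s t) := by
  have heq : convexJoin ℝ s t =
      (fun p : ℝ × EuclideanSpace ℝ (Fin d) × EuclideanSpace ℝ (Fin d) =>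
        (1 - p.1) • p.2.1 + p.1 • p.2.2) '' (Set.Icc (0:ℝ) 1 ×ˢ s ×ˢ t) := by
    ext x
    simp only [convexJoin, Set.mem_iUnion, segment_eq_image, Set.mem_image, Set.mem_prod,
      Set.mem_Icc, Prod.exists]
    constructor
    · rintro ⟨a, ha, b, hb, θ, hθ, rfl⟩
      exact ⟨θ, a, b, ⟨hθ, ha, hb⟩, rfl⟩
    · rintro ⟨θ, a, b, ⟨hθ, ha, hb⟩, rfl⟩
      exact ⟨a, ha, b, hb, θ, hθ, rfl⟩
  rw [heq]
  apply IsCompact.image (isCompact_Icc.prod (hs.prod ht))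
  apply Continuous.add
  · exact ((continuous_const.sub continuous_fst).smul (continuous_fst.comp continuous_snd))
  · exact (continuous_fst.smul ((continuous_snd.comp continuous_snd)))

lemma isCompact_convexHull_biUnion {ι : Type} [DecidableEq ι] (F : Finset ι)
    (K : ι → Set (EuclideanSpace ℝ (Fin d)))
    (hcpt : ∀ i ∈ F, IsCompact (K i)) (hcv : ∀ i ∈ F, Convex ℝ (K i))
    (hne : ∀ i ∈ F, (K i).Nonempty) :
    IsCompact (convexHull ℝ (⋃ i ∈ F, K i)) := by
  classical
  induction F using Finset.induction with
  | empty => simp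
  | @insert a F ha ih =>
    have hKa : IsCompact (K a) := hcpt a (Finset.mem_insert_self a F)
    have hKacv : Convex ℝ (K a) := hcv a (Finset.mem_insert_self a F)
    have hKane : (K a).Nonempty := hne a (Finset.mem_insert_self a F)
    have hunion : (⋃ i ∈ insert a F, K i) = K a ∪ ⋃ i ∈ F, K i := by
      simp [Set.biUnion_insert]
    rw [hunion]
    rcases F.eq_empty_or_nonempty with rfl | hF'
    · simp only [Finset.notMem_empty, Set.iUnion_of_empty, Set.iUnion_empty, Set.union_empty]
      rw [hKacv.convexHull_eq]
      exact hKa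
    · have hne2 : (⋃ i ∈ F, K i).Nonempty := by
        obtain ⟨b, hb⟩ := hF'
        obtain ⟨x, hx⟩ := hne b (Finset.mem_insert_of_mem hb)
        exact ⟨x, Set.mem_biUnion hb hx⟩
      rw [convexHull_union hKane hne2]
      apply isCompact_convexJoin
      · rw [hKacv.convexHull_eq]; exact hKa
      · exact ih (fun i hi => hcpt i (Finset.mem_insert_of_mem hi))
          (fun i hi => hcv i (Finset.mem_insert_of_mem hi))
          (fun i hi => hne i (Finset.mem_insert_of_mem hi))

def BT (T : Finset (Fin d)) : Set (EuclideanSpace ℝ (Fin d)) :=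
  {w | (∀ i ∉ T, w i = 0) ∧ ‖w‖ ≤ 1}

lemma BT_closed (T : Finset (Fin d)) : IsClosed (BT T) := by
  have h1 : BT T = (⋂ (i : Fin d) (_ : i ∉ T), {w : EuclideanSpace ℝ (Fin d) | w i = 0})
      ∩ Metric.closedBall 0 1 := by
    ext w
    simp [BT, Set.mem_iInter, mem_closedBall_zero_iff]
  rw [h1]
  refine IsClosed.inter ?_ Metric.isClosed_closedBall
  exact isClosed_iInter fun i => isClosed_iInter fun _ =>
    isClosed_eq (EuclideanSpace.proj i).continuous continuous_const

lemma BT_compact (T : Finset (Fin d)) : IsCompact (BT T) := by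
  apply IsCompact.of_isClosed_subset (isCompact_closedBall (0 : EuclideanSpace ℝ (Fin d)) 1)
    (BT_closed T)
  intro w hw
  rw [mem_closedBall_zero_iff]
  exact hw.2

lemma BT_convex (T : Finset (Fin d)) : Convex ℝ (BT T) := by
  have h1 : Convex ℝ {w : EuclideanSpace ℝ (Fin d) | ∀ i ∉ T, w i = 0} := by
    intro x hx y hy a b ha hb hab
    intro i hi
    have : (a • x + b • y) i = a * x i + b * y i := by
      rw [PiLp.add_apply, PiLp.smul_apply, PiLp.smul_apply, smul_eq_mul, smul_eq_mul]
    rw [this, hx i hi, hy i hi, mul_zero, mul_zero, add_zero]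
  have h2 : Convex ℝ {w : EuclideanSpace ℝ (Fin d) | ‖w‖ ≤ 1} := by
    have : {w : EuclideanSpace ℝ (Fin d) | ‖w‖ ≤ 1} = Metric.closedBall 0 1 := by
      ext w; simp [mem_closedBall_zero_iff]
    rw [this]
    exact convex_closedBall 0 1
  exact h1.inter h2

lemma BT_nonempty (T : Finset (Fin d)) : (BT T).Nonempty :=
  ⟨0, fun i _ => rfl, by simp⟩

lemma Sk_eq_biUnion (hkd : k ≤ d) :
    {w : EuclideanSpace ℝ (Fin d) | (Finset.univ.filter fun i => w i ≠ 0).card ≤ k ∧ ‖w‖ ≤ 1}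
      = ⋃ T ∈ Finset.powersetCard k (Finset.univ : Finset (Fin d)), BT T := by
  ext w
  simp only [Set.mem_setOf_eq, Set.mem_iUnion, Finset.mem_powersetCard]
  constructor
  · rintro ⟨h1, h2⟩
    obtain ⟨T, hsub, hcard⟩ := Finset.exists_superset_card_eq h1 (by simpa using hkd)
    refine ⟨T, ⟨Finset.subset_univ T, hcard⟩, ?_, h2⟩
    intro i hi
    by_contra hne
    exact hi (hsub (Finset.mem_filter.mpr ⟨Finset.mem_univ i, hne⟩))
  · rintro ⟨T, ⟨_, hcard⟩, h1, h2⟩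
    refine ⟨?_, h2⟩
    calc (Finset.univ.filter fun i => w i ≠ 0).card ≤ T.card := by
          apply Finset.card_le_card
          intro i hi
          simp only [Finset.mem_filter, Finset.mem_univ, true_and] at hi
          by_contra hnot
          exact hi (h1 i hnot)
    _ = k := hcard

lemma isCompact_kSupBall (hk1 : 1 ≤ k) (hkd : k ≤ d) : IsCompact (kSupBall' d k) := by
  rw [kSupBall', Sk_eq_biUnion hkd]
  exact isCompact_convexHull_biUnion _ _ (fun T _ => BT_compact T) (fun T _ => BT_convex T)
    (fun T _ => BT_nonempty T)

lemma base_decomp (x : EuclideanSpace ℝ (Fin d)) :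
    ∑ i, x i • EuclideanSpace.single i (1:ℝ) = x := by
  have := (EuclideanSpace.basisFun (Fin d) ℝ).sum_repr x
  simpa [EuclideanSpace.basisFun_apply, EuclideanSpace.basisFun_repr] using this

lemma single_mem_Sk (hk1 : 1 ≤ k) (c : ℝ) (hc : |c| ≤ 1) (i : Fin d) :
    (c • EuclideanSpace.single i (1:ℝ)) ∈
      {w : EuclideanSpace ℝ (Fin d) | (Finset.univ.filter fun j => w j ≠ 0).card ≤ k ∧ ‖w‖ ≤ 1} := by
  constructor
  · have hsub : (Finset.univ.filter fun j => (c • EuclideanSpace.single i (1:ℝ)) j ≠ 0)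
        ⊆ ({i} : Finset (Fin d)) := by
      intro j hj
      simp only [Finset.mem_filter, Finset.mem_univ, true_and] at hj
      simp only [Finset.mem_singleton]
      by_contra hne
      apply hj
      rw [PiLp.smul_apply, EuclideanSpace.single_apply, if_neg hne, smul_eq_mul, mul_zero]
    calc (Finset.univ.filter fun j => (c • EuclideanSpace.single i (1:ℝ)) j ≠ 0).card
        ≤ ({i} : Finset (Fin d)).card := Finset.card_le_card hsub
    _ = 1 := by simp
    _ ≤ k := hk1
  · rw [norm_smul, EuclideanSpace.norm_single]
    simpa using hc

lemma zero_mem_Sk (hk1 : 1 ≤ k) :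
    (0 : EuclideanSpace ℝ (Fin d)) ∈
      {w : EuclideanSpace ℝ (Fin d) | (Finset.univ.filter fun j => w j ≠ 0).card ≤ k ∧ ‖w‖ ≤ 1} := by
  constructor
  · have : (Finset.univ.filter fun j : Fin d => (0 : EuclideanSpace ℝ (Fin d)) j ≠ 0) = ∅ := by
      ext j; simp
    rw [this]; simpa using hk1
  · simp

lemma gauge_set_nonempty (hk1 : 1 ≤ k) (w : EuclideanSpace ℝ (Fin d)) :
    {r : ℝ | 0 < r ∧ w ∈ r • kSupBall' d k}.Nonempty := by
  classical
  set r : ℝ := (∑ i, |w i|) + 1 with hr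
  have hsum0 : 0 ≤ ∑ i, |w i| := Finset.sum_nonneg fun i _ => abs_nonneg _
  have hrpos : 0 < r := by positivity
  refine ⟨r, hrpos, ?_⟩
  rw [Set.mem_smul_set_iff_inv_smul_mem₀ (ne_of_gt hrpos)]
  set W : Option (Fin d) → ℝ := fun o => o.elim (1 - (∑ i, |w i|) / r) (fun i => |w i| / r) with hW
  set Z : Option (Fin d) → EuclideanSpace ℝ (Fin d) := fun o =>
    o.elim 0 (fun i => if w i = 0 then 0 else (w i / |w i|) • EuclideanSpace.single i (1:ℝ)) with hZ
  have hW0 : ∀ o ∈ (Finset.univ : Finset (Option (Fin d))), 0 ≤ W o := by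
    rintro (_ | i) _
    · simp only [hW, Option.elim]
      have : (∑ i, |w i|) / r ≤ 1 := by
        rw [div_le_one hrpos]; simp [hr]
      linarith
    · exact div_nonneg (abs_nonneg _) (le_of_lt hrpos)
  have hWsum : ∑ o : Option (Fin d), W o = 1 := by
    rw [Fintype.sum_option]
    simp only [hW, Option.elim]
    rw [← Finset.sum_div]
    field_simp
    ring
  have hZmem : ∀ o ∈ (Finset.univ : Finset (Option (Fin d))), Z o ∈
      {w : EuclideanSpace ℝ (Fin d) | (Finset.univ.filter fun j => w j ≠ 0).card ≤ k ∧ ‖w‖ ≤ 1} := by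
    rintro (_ | i) _
    · exact zero_mem_Sk hk1
    · simp only [hZ, Option.elim]
      by_cases hwi : w i = 0
      · rw [if_pos hwi]; exact zero_mem_Sk hk1
      · rw [if_neg hwi]
        apply single_mem_Sk hk1
        rw [abs_div, abs_abs, div_self (abs_ne_zero.mpr hwi)]
  have hcm := Finset.centerMass_mem_convexHull (Finset.univ : Finset (Option (Fin d))) hW0
    (by rw [hWsum]; norm_num) hZmem
  have hcmeq : (Finset.univ : Finset (Option (Fin d))).centerMass W Z = r⁻¹ • w := by
    rw [Finset.centerMass, hWsum, inv_one, one_smul]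
    rw [Fintype.sum_option]
    have hz0 : W none • Z none = 0 := by simp [hW, hZ, Option.elim]
    rw [hz0, zero_add]
    have hterm : ∀ i : Fin d, W (some i) • Z (some i) = (r⁻¹ * w i) • EuclideanSpace.single i (1:ℝ) := by
      intro i
      simp only [hW, hZ, Option.elim]
      by_cases hwi : w i = 0
      · rw [if_pos hwi, smul_zero, hwi, mul_zero, zero_smul]
      · rw [if_neg hwi, smul_smul]
        congr 1
        field_simp
    rw [Finset.sum_congr rfl (fun i _ => hterm i)]
    have : ∀ i : Fin d, (r⁻¹ * w i) • EuclideanSpace.single i (1:ℝ)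
        = (r⁻¹ • w) i • EuclideanSpace.single i (1:ℝ) := by
      intro i; rw [PiLp.smul_apply, smul_eq_mul]
    rw [Finset.sum_congr rfl (fun i _ => this i)]
    exact base_decomp (r⁻¹ • w)
  rw [← hcmeq]
  exact hcm

lemma gauge_mul_bound (hk1 : 1 ≤ k) (hkd : k ≤ d) (u : Fin d → ℝ) (w : EuclideanSpace ℝ (Fin d)) :
    ∑ i, u i * w i ≤ gauge (kSupBall' d k) w * Real.sqrt (topSum k u) := by
  set t := Real.sqrt (topSum k u) with ht
  have ht0 : 0 ≤ t := Real.sqrt_nonneg _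
  have key : ∀ r ∈ {r : ℝ | 0 < r ∧ w ∈ r • kSupBall' d k}, ∑ i, u i * w i ≤ r * t := by
    rintro r ⟨hr, x, hx, rfl⟩
    have hb := hull_bound hkd u x hx
    have heq : ∑ i, u i * (r • x) i = r * ∑ i, u i * x i := by
      rw [Finset.mul_sum]
      exact Finset.sum_congr rfl fun i _ => by rw [PiLp.smul_apply, smul_eq_mul]; ring
    rw [heq]
    exact mul_le_mul_of_nonneg_left hb (le_of_lt hr)
  rcases eq_or_lt_of_le ht0 with h0 | hpos
  · have htop0 : topSum k u = 0 := by
      have h : topSum k u ≤ 0 := Real.sqrt_eq_zero'.mp h0.symm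
      exact le_antisymm h (topSum_nonneg k u)
    have hu : ∀ j, u j = 0 := by
      intro j
      have h1 := sq_le_topSum hk1 hkd u j
      rw [htop0] at h1
      nlinarith [sq_nonneg (u j)]
    have : ∑ i, u i * w i = 0 := Finset.sum_eq_zero fun i _ => by rw [hu i, zero_mul]
    rw [this, ← h0, mul_zero]
  · have hle : (∑ i, u i * w i) / t ≤ gauge (kSupBall' d k) w := by
      rw [gauge]
      apply le_csInf (gauge_set_nonempty hk1 w)
      intro r hr
      rw [div_le_iff₀ hpos]
      exact key r hr
    calc ∑ i, u i * w i = ((∑ i, u i * w i) / t) * t := by field_simp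
    _ ≤ gauge (kSupBall' d k) w * t := mul_le_mul_of_nonneg_right hle ht0

end S16

open S16 Finset Pointwise in
/-- half the squared k-support norm is the Fenchel conjugate of
half the squared ℓ2 norm of the `k` largest-magnitude entries:
`½(‖w‖ₖˢᵖ)² = max{⟨u, w⟩ − ½ ∑_{i=1}^k (|u|↓ᵢ)² : u ∈ ℝᵈ}`. -/
theorem statement16 (d k : ℕ) (hk1 : 1 ≤ k) (hkd : k ≤ d) (w : EuclideanSpace ℝ (Fin d)) :
    IsGreatest {x : ℝ | ∃ u : EuclideanSpace ℝ (Fin d),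
        x = (∑ i, u i * w i) - (1 / 2) * ∑ i ∈ Finset.Icc 1 k, zD u i ^ 2}
      ((1 / 2) * kSupNorm d k w ^ 2) := by
  classical
  have hball : kSupBall d k = kSupBall' d k := rfl
  set g := kSupNorm d k w with hgdef
  have hgauge : g = gauge (kSupBall' d k) w := by rw [hgdef, kSupNorm, hball]
  have hg0 : 0 ≤ g := by rw [hgauge]; exact gauge_nonneg _
  -- the compact constraint set
  set KK := {u : EuclideanSpace ℝ (Fin d) | topSum k u ≤ 1} with hKK
  have hKclosed : IsClosed KK := by
    have heq : KK = ⋂ S ∈ Finset.powersetCard k (Finset.univ : Finset (Fin d)),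
        {u : EuclideanSpace ℝ (Fin d) | ∑ j ∈ S, u j ^ 2 ≤ 1} := by
      ext u
      simp only [hKK, Set.mem_setOf_eq, Set.mem_iInter, Finset.mem_powersetCard]
      constructor
      · intro h S hS
        exact le_trans (sum_sq_le_topSum hkd u (le_of_eq hS.2)) h
      · intro h
        have hT : Tset k u ∈ Finset.powersetCard k (Finset.univ : Finset (Fin d)) := by
          rw [Finset.mem_powersetCard]
          refine ⟨Finset.subset_univ _, ?_⟩
          rw [Tset, Finset.card_image_of_injective _ (sg u).injective, card_topIdx hkd]
        have := h _ (Finset.mem_powersetCard.mp hT)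
        exact this
    rw [heq]
    apply isClosed_biInter
    intro S _
    have hcont : Continuous (fun u : EuclideanSpace ℝ (Fin d) => ∑ j ∈ S, u j ^ 2) := by
      apply continuous_finset_sum
      intro j _
      exact ((EuclideanSpace.proj j).continuous).pow 2
    exact isClosed_le hcont continuous_const
  have hKcpt : IsCompact KK := by
    apply IsCompact.of_isClosed_subset
      (isCompact_closedBall (0 : EuclideanSpace ℝ (Fin d)) (Real.sqrt d)) hKclosed
    intro u hu
    rw [mem_closedBall_zero_iff, norm_sq_sum]
    apply Real.sqrt_le_sqrt
    calc ∑ j, u j ^ 2 ≤ ∑ _j : Fin d, (1:ℝ) := by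
          apply Finset.sum_le_sum
          intro j _
          exact le_trans (sq_le_topSum hk1 hkd u j) hu
    _ = d := by simp
  have hcont : Continuous (fun u : EuclideanSpace ℝ (Fin d) => ∑ i, u i * w i) := by
    apply continuous_finset_sum
    intro i _
    exact (EuclideanSpace.proj i).continuous.mul continuous_const
  have h0K : (0 : EuclideanSpace ℝ (Fin d)) ∈ KK := by
    simp only [hKK, Set.mem_setOf_eq, topSum]
    have : ∀ j ∈ Tset k (0 : EuclideanSpace ℝ (Fin d)), (0 : EuclideanSpace ℝ (Fin d)) j ^ 2 = 0 := by
      intro j _; simp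
    rw [Finset.sum_congr rfl this]
    simp
  obtain ⟨u₀, hu₀K, hmax⟩ := hKcpt.exists_isMaxOn ⟨0, h0K⟩ hcont.continuousOn
  set N := ∑ i, u₀ i * w i with hN
  have hmax' : ∀ u ∈ KK, ∑ i, u i * w i ≤ N := fun u hu => hmax hu
  have hN0 : 0 ≤ N := by
    have := hmax' 0 h0K
    simpa using this
  have hu₀topsum : topSum k u₀ ≤ 1 := hu₀K
  have hNg : N ≤ g := by
    have h1 := gauge_mul_bound hk1 hkd u₀ w
    rw [← hgauge] at h1
    have h2 : Real.sqrt (topSum k u₀) ≤ 1 := Real.sqrt_le_one.mpr hu₀topsum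
    calc N ≤ g * Real.sqrt (topSum k u₀) := h1
    _ ≤ g * 1 := mul_le_mul_of_nonneg_left h2 hg0
    _ = g := mul_one g
  -- general bound by N
  have hbound : ∀ u : Fin d → ℝ, ∑ i, u i * w i ≤ N * Real.sqrt (topSum k u) := by
    intro u
    by_cases h0 : topSum k u = 0
    · have hu : ∀ j, u j = 0 := by
        intro j
        have h1 := sq_le_topSum hk1 hkd u j
        rw [h0] at h1
        nlinarith [sq_nonneg (u j)]
      have : ∑ i, u i * w i = 0 := Finset.sum_eq_zero fun i _ => by rw [hu i, zero_mul]
      rw [this, h0, Real.sqrt_zero, mul_zero]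
    · have htop : 0 < topSum k u := lt_of_le_of_ne (topSum_nonneg k u) (Ne.symm h0)
      set t := Real.sqrt (topSum k u) with ht
      have htpos : 0 < t := Real.sqrt_pos.mpr htop
      set u' : Fin d → ℝ := fun j => t⁻¹ * u j with hu'
      have hmem : (WithLp.toLp 2 u' : EuclideanSpace ℝ (Fin d)) ∈ KK := by
        show topSum k u' ≤ 1
        rw [hu', topSum_smul hkd, ht]
        rw [inv_pow, Real.sq_sqrt (le_of_lt htop)]
        rw [inv_mul_cancel₀ (ne_of_gt htop)]
      have h1 := hmax' (WithLp.toLp 2 u') hmem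
      have h2 : ∑ i, u' i * w i = t⁻¹ * ∑ i, u i * w i := by
        rw [Finset.mul_sum]
        exact Finset.sum_congr rfl fun i _ => by rw [hu']; ring
      rw [h2] at h1
      calc ∑ i, u i * w i = t * (t⁻¹ * ∑ i, u i * w i) := by field_simp
      _ ≤ t * N := mul_le_mul_of_nonneg_left h1 (le_of_lt htpos)
      _ = N * t := mul_comm _ _
  -- gauge ≤ N by separation
  have hgN : g ≤ N := by
    by_contra hlt
    push_neg at hlt
    set tt := (N + g) / 2 with htt
    have h1 : 0 < tt := by rw [htt]; linarith
    have h2 : tt < g := by rw [htt]; linarith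
    have h3 : N < tt := by rw [htt]; linarith
    have hnot : w ∉ tt • kSupBall' d k := by
      intro hmem
      have := gauge_le_of_mem (le_of_lt h1) hmem
      rw [← hgauge] at this
      linarith
    have hCcpt : IsCompact (kSupBall' d k) := isCompact_kSupBall hk1 hkd
    have hclosed : IsClosed (tt • kSupBall' d k) := (hCcpt.smul tt).isClosed
    have hconv2 : Convex ℝ (tt • kSupBall' d k) := (convex_convexHull ℝ _).smul tt
    obtain ⟨f, s, hfs, hsw⟩ := geometric_hahn_banach_closed_point hconv2 hclosed hnot
    set uf : Fin d → ℝ := fun i => f (EuclideanSpace.single i 1) with huf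
    have hf_eq : ∀ x : EuclideanSpace ℝ (Fin d), f x = ∑ i, uf i * x i := by
      intro x
      conv_lhs => rw [← base_decomp x]
      rw [map_sum]
      exact Finset.sum_congr rfl fun i _ => by rw [map_smul, smul_eq_mul, huf, mul_comm]
    obtain ⟨v, hv1, hv2, hv3⟩ := exists_attain hkd uf
    have hvC : v ∈ kSupBall' d k := subset_convexHull ℝ _ ⟨hv1, hv2⟩
    have h5 : f (tt • v) < s := hfs _ (Set.smul_mem_smul_set hvC)
    have h6 : s < f w := hsw
    have h7 : f (tt • v) = tt * Real.sqrt (topSum k uf) := by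
      rw [map_smul, smul_eq_mul, hf_eq v, hv3]
    have h8 : f w ≤ N * Real.sqrt (topSum k uf) := by
      rw [hf_eq w]
      exact hbound uf
    have h9 : 0 ≤ Real.sqrt (topSum k uf) := Real.sqrt_nonneg _
    nlinarith
  have hgeq : g = N := le_antisymm hgN hNg
  constructor
  · -- membership
    by_cases hgz : g = 0
    · refine ⟨0, ?_⟩
      have hzd : ∑ i ∈ Finset.Icc 1 k, zD (0 : EuclideanSpace ℝ (Fin d)) i ^ 2
          = topSum k (0 : EuclideanSpace ℝ (Fin d)) := sum_zD_sq hk1 hkd _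
      have htop0 : topSum k (0 : EuclideanSpace ℝ (Fin d)) = 0 := by
        rw [topSum]
        apply Finset.sum_eq_zero
        intro j _
        simp
      have hsum0 : ∑ i, (0 : EuclideanSpace ℝ (Fin d)) i * w i = 0 := by
        apply Finset.sum_eq_zero
        intro i _
        simp
      rw [hzd, htop0, hsum0, hgz]
      ring
    · have hgpos : 0 < g := lt_of_le_of_ne hg0 (Ne.symm hgz)
      have hNpos : 0 < N := hgeq ▸ hgpos
      have htop1 : topSum k u₀ = 1 := by
        by_contra hne
        have hlt2 : topSum k u₀ < 1 := lt_of_le_of_ne hu₀topsum hne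
        have htpos : 0 < topSum k u₀ := by
          rcases lt_or_eq_of_le (topSum_nonneg k u₀) with h | h
          · exact h
          · exfalso
            have hu : ∀ j, u₀ j = 0 := by
              intro j
              have h1 := sq_le_topSum hk1 hkd u₀ j
              rw [← h] at h1
              nlinarith [sq_nonneg (u₀ j)]
            have : N = 0 := Finset.sum_eq_zero fun i _ => by rw [hu i, zero_mul]
            linarith
        set c := (Real.sqrt (topSum k u₀))⁻¹ with hc
        have hsq : Real.sqrt (topSum k u₀) < 1 := by
          rw [show (1:ℝ) = Real.sqrt 1 from (Real.sqrt_one).symm]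
          exact Real.sqrt_lt_sqrt (le_of_lt htpos) hlt2
        have hsqpos : 0 < Real.sqrt (topSum k u₀) := Real.sqrt_pos.mpr htpos
        have hc1 : 1 < c := (one_lt_inv₀ hsqpos).mpr hsq
        have hmem : (WithLp.toLp 2 (fun j => c * u₀ j) : EuclideanSpace ℝ (Fin d)) ∈ KK := by
          show topSum k (fun j => c * u₀ j) ≤ 1
          rw [topSum_smul hkd, hc, inv_pow, Real.sq_sqrt (le_of_lt htpos),
            inv_mul_cancel₀ (ne_of_gt htpos)]
        have h1 := hmax' _ hmem
        have h2 : ∑ i, (WithLp.toLp 2 (fun j => c * u₀ j) : EuclideanSpace ℝ (Fin d)) i * w i = c * N := by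
          rw [hN, Finset.mul_sum]
          exact Finset.sum_congr rfl fun i _ => by ring
        rw [h2] at h1
        nlinarith
      refine ⟨(WithLp.toLp 2 (fun j => g * u₀ j) : EuclideanSpace ℝ (Fin d)), ?_⟩
      have hzd : ∑ i ∈ Finset.Icc 1 k, zD (WithLp.toLp 2 (fun j => g * u₀ j) : EuclideanSpace ℝ (Fin d)) i ^ 2
          = topSum k (fun j => g * u₀ j) := sum_zD_sq hk1 hkd _
      rw [hzd, topSum_smul hkd, htop1, mul_one]
      have h2 : ∑ i, (WithLp.toLp 2 (fun j => g * u₀ j) : EuclideanSpace ℝ (Fin d)) i * w i = g * N := by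
        rw [hN, Finset.mul_sum]
        exact Finset.sum_congr rfl fun i _ => by ring
      rw [h2, ← hgeq]
      ring
  · -- upper bound
    rintro x ⟨u, rfl⟩
    have hzd : ∑ i ∈ Finset.Icc 1 k, zD u i ^ 2 = topSum k u := sum_zD_sq hk1 hkd u
    rw [hzd]
    have h1 := gauge_mul_bound hk1 hkd u w
    rw [← hgauge] at h1
    have h2 : Real.sqrt (topSum k u) ^ 2 = topSum k u := Real.sq_sqrt (topSum_nonneg k u)
    nlinarith [sq_nonneg (g - Real.sqrt (topSum k u))]
end
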